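/- arXiv:2305.10292 — 3 statements merged into one kernel-verified Lean document; each statement's English description precedes it below -/
import Mathlib

section
/- At the end of the main loop of algorithm LA, the constructed sets X and Y are disjoint and satisfy f(O1) ≤ 3 (f(X) + f(Y)), where O1 is an optimal solution of the knapsack-constrained maximization problem restricted to the ground set V1 = {e ∈ V : c(e) ≤ B/2}, i.e., f(O1) = max{f(S) : S ⊆ V1, c(S) ≤ B}. -/
open scoped BigOperators Classical

/-- The cost of a set is the (modular) sum of the costs of its elements. -/
noncomputable def cost {α : Type*} (c : α → ℝ) (S : Finset α) : ℝ := ∑ e ∈ S, c e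

/-- Marginal gain `f(e|S) = f(S ∪ {e}) − f(S)`. -/
noncomputable def marg {α : Type*} [DecidableEq α] (f : Finset α → ℝ) (e : α)
    (S : Finset α) : ℝ := f (insert e S) - f S

/-- One step of the main loop of algorithm `LA`: among the sets `Z ∈ {X, Y}` with
`f(e|Z)/c(e) ≥ f(Z)/B` (if any), the element `e` is added to one maximizing
`f(e|Z)/c(e)` (ties broken towards `X`).  Sets are maintained as lists in order of
insertion (oldest first). -/
noncomputable def laStep {α : Type*} [DecidableEq α] (f : Finset α → ℝ) (c : α → ℝ)
    (B : ℝ) (st : List α × List α) (e : α) : List α × List α :=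
  let gX := marg f e st.1.toFinset / c e
  let gY := marg f e st.2.toFinset / c e
  let okX := f st.1.toFinset / B ≤ gX
  let okY := f st.2.toFinset / B ≤ gY
  if okX ∧ (gY ≤ gX ∨ ¬ okY) then (st.1 ++ [e], st.2)
  else if okY then (st.1, st.2 ++ [e])
  else st

/-- The main loop of algorithm `LA`: starting from `X = Y = ∅`, scan the elements of the
input list (an enumeration of `V1 = {e ∈ V : c(e) ≤ B/2}` in a fixed order) once. -/
noncomputable def laRun {α : Type*} [DecidableEq α] (f : Finset α → ℝ) (c : α → ℝ)
    (B : ℝ) (l : List α) : List α × List α :=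
  l.foldl (laStep f c B) ([], [])

lemma cost_nonneg'' {α : Type*} (c : α → ℝ) (S : Finset α) (h : ∀ e ∈ S, 0 ≤ c e) :
    0 ≤ cost c S := Finset.sum_nonneg h

lemma cost_mono'' {α : Type*} (c : α → ℝ) {S T : Finset α} (hST : S ⊆ T)
    (h : ∀ e ∈ T, 0 ≤ c e) : cost c S ≤ cost c T :=
  Finset.sum_le_sum_of_subset_of_nonneg hST (fun i hi _ => h i hi)

lemma cost_insert'' {α : Type*} [DecidableEq α] (c : α → ℝ) {S : Finset α} {e : α}
    (he : e ∉ S) : cost c (insert e S) = c e + cost c S := Finset.sum_insert he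

lemma submod_union {α : Type*} [DecidableEq α] (V : Finset α) (f : Finset α → ℝ)
    (hsub : ∀ A B' : Finset α, A ⊆ B' → B' ⊆ V → ∀ e ∈ V, e ∉ B' →
      f (insert e B') - f B' ≤ f (insert e A) - f A) :
    ∀ S : Finset α, S ⊆ V → ∀ A Bx : Finset α, A ⊆ Bx → Bx ⊆ V → Disjoint S Bx →
      f (Bx ∪ S) - f Bx ≤ f (A ∪ S) - f A := by
  intro S
  induction S using Finset.induction_on with
  | empty => intro _ A Bx _ _ _; simp
  | insert e S he ih =>
    intro hSV A Bx hAB hBV hdisj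
    have heV : e ∈ V := hSV (Finset.mem_insert_self _ _)
    have hSV' : S ⊆ V := (Finset.subset_insert _ _).trans hSV
    have heBx : e ∉ Bx := Finset.disjoint_left.mp hdisj (Finset.mem_insert_self _ _)
    have hdisj' : Disjoint S Bx := hdisj.mono_left (Finset.subset_insert _ _)
    have h1 : f (insert e (Bx ∪ S)) - f (Bx ∪ S) ≤ f (insert e (A ∪ S)) - f (A ∪ S) :=
      hsub (A ∪ S) (Bx ∪ S) (Finset.union_subset_union hAB le_rfl)
        (Finset.union_subset hBV hSV') e heV
        (by simp [heBx, he])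
    have h2 := ih hSV' A Bx hAB hBV hdisj'
    have e1 : Bx ∪ insert e S = insert e (Bx ∪ S) := Finset.union_insert _ _ _
    have e2 : A ∪ insert e S = insert e (A ∪ S) := Finset.union_insert _ _ _
    rw [e1, e2]
    linarith

section step
variable {α : Type*} [DecidableEq α]
variable (V : Finset α) (f : Finset α → ℝ) (c : α → ℝ) (B : ℝ)

/-- Facts for the case where `e` is added to `X` (the "winning" set). -/
lemma la_add_ineq (hB : 0 < B)
    (hsub : ∀ A B' : Finset α, A ⊆ B' → B' ⊆ V → ∀ e ∈ V, e ∉ B' →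
      f (insert e B') - f B' ≤ f (insert e A) - f A)
    (Q Xf Yf : Finset α) (GX GY : ℝ) (e : α)
    (heV : e ∈ V) (hce : 0 < c e)
    (hQV : Q ⊆ V) (hXV : Xf ⊆ V) (hYV : Yf ⊆ V)
    (heQ : e ∉ Q) (heX : e ∉ Xf) (heY : e ∉ Yf)
    (hfX : 0 ≤ f Xf) (hfY : 0 ≤ f Yf)
    (hkX : 0 ≤ cost c (Q \ Xf)) (hkY : 0 ≤ cost c (Q \ Yf))
    (hokX : f Xf / B ≤ marg f e Xf / c e)
    (hsel : marg f e Yf / c e ≤ marg f e Xf / c e ∨ ¬ (f Yf / B ≤ marg f e Yf / c e))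
    (hI1 : f (Q ∪ Xf) ≤ (1 + cost c (Q \ Xf) / B) * f Xf + GY)
    (hI2 : f (Q ∪ Yf) ≤ (1 + cost c (Q \ Yf) / B) * f Yf + GX) :
    0 ≤ marg f e Xf ∧
    f (Q ∪ insert e Xf) ≤ (1 + cost c (Q \ insert e Xf) / B) * f (insert e Xf) + GY ∧
    f (insert e Q ∪ insert e Xf) ≤
      (1 + cost c (insert e Q \ insert e Xf) / B) * f (insert e Xf) + GY ∧
    f (insert e Q ∪ Yf) ≤
      (1 + cost c (insert e Q \ Yf) / B) * f Yf + (GX + marg f e Xf) := by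
  have hg0 : 0 ≤ marg f e Xf := by
    have h1 : 0 ≤ marg f e Xf / c e := le_trans (div_nonneg hfX hB.le) hokX
    have h2 := mul_nonneg h1 hce.le
    rwa [div_mul_cancel₀ _ hce.ne'] at h2
  have hQXV : Q ∪ Xf ⊆ V := Finset.union_subset hQV hXV
  have hQYV : Q ∪ Yf ⊆ V := Finset.union_subset hQV hYV
  have hddX : f (insert e (Q ∪ Xf)) - f (Q ∪ Xf) ≤ marg f e Xf :=
    hsub Xf (Q ∪ Xf) Finset.subset_union_right hQXV e heV (by simp [heQ, heX])
  have hddY : f (insert e (Q ∪ Yf)) - f (Q ∪ Yf) ≤ marg f e Yf :=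
    hsub Yf (Q ∪ Yf) Finset.subset_union_right hQYV e heV (by simp [heQ, heY])
  have hfe : f (insert e Xf) = f Xf + marg f e Xf := by simp [marg]
  have hkB : 0 ≤ cost c (Q \ Xf) / B := div_nonneg hkX hB.le
  have hkBY : 0 ≤ cost c (Q \ Yf) / B := div_nonneg hkY hB.le
  refine ⟨hg0, ?_, ?_, ?_⟩
  · have e1 : Q ∪ insert e Xf = insert e (Q ∪ Xf) := Finset.union_insert _ _ _
    have e2 : Q \ insert e Xf = Q \ Xf := by
      ext x
      simp only [Finset.mem_sdiff, Finset.mem_insert, not_or]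
      constructor
      · rintro ⟨hx, _, hx2⟩; exact ⟨hx, hx2⟩
      · rintro ⟨hx, hx2⟩; exact ⟨hx, fun h => heQ (h ▸ hx), hx2⟩
    rw [e1, e2, hfe]
    nlinarith [mul_nonneg hkB hg0]
  · have e1 : insert e Q ∪ insert e Xf = insert e (Q ∪ Xf) := by
      ext x; simp only [Finset.mem_union, Finset.mem_insert]; tauto
    have e2 : insert e Q \ insert e Xf = Q \ Xf := by
      ext x
      simp only [Finset.mem_sdiff, Finset.mem_insert, not_or]
      constructor
      · rintro ⟨hx1 | hx1, hx2, hx3⟩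
        · exact absurd hx1 hx2
        · exact ⟨hx1, hx3⟩
      · rintro ⟨hx, hx2⟩
        exact ⟨Or.inr hx, fun h => heQ (h ▸ hx), hx2⟩
    rw [e1, e2, hfe]
    nlinarith [mul_nonneg hkB hg0]
  · have e1 : insert e Q ∪ Yf = insert e (Q ∪ Yf) := Finset.insert_union _ _ _
    have e2 : insert e Q \ Yf = insert e (Q \ Yf) := by
      ext x
      simp only [Finset.mem_sdiff, Finset.mem_insert]
      constructor
      · rintro ⟨hx1 | hx1, hx2⟩
        · exact Or.inl hx1
        · exact Or.inr ⟨hx1, hx2⟩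
      · rintro (hx | ⟨hx1, hx2⟩)
        · exact ⟨Or.inl hx, hx ▸ heY⟩
        · exact ⟨Or.inr hx1, hx2⟩
    have heQY : e ∉ Q \ Yf := by simp [heQ]
    rw [e1, e2, cost_insert'' c heQY]
    have hring : (1 + (c e + cost c (Q \ Yf)) / B) * f Yf
        = (1 + cost c (Q \ Yf) / B) * f Yf + (c e / B) * f Yf := by ring
    rw [hring]
    have hceB : 0 ≤ (c e / B) * f Yf := mul_nonneg (div_nonneg hce.le hB.le) hfY
    rcases hsel with hle | hnok
    · have : marg f e Yf ≤ marg f e Xf := by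
        have := (div_le_div_iff_of_pos_right hce).mp hle
        exact this
      linarith
    · push_neg at hnok
      have h3 : marg f e Yf * B < f Yf * c e := by
        have := (div_lt_div_iff₀ hce hB).mp hnok
        linarith
      have h4 : marg f e Yf ≤ (c e / B) * f Yf := by
        rw [div_mul_eq_mul_div, le_div_iff₀ hB]
        nlinarith
      linarith

/-- Facts for the case where `e` is not added to `X` (threshold fails for `X`). -/
lemma la_noadd_ineq (hB : 0 < B)
    (hsub : ∀ A B' : Finset α, A ⊆ B' → B' ⊆ V → ∀ e ∈ V, e ∉ B' →
      f (insert e B') - f B' ≤ f (insert e A) - f A)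
    (Q Xf : Finset α) (GY : ℝ) (e : α)
    (heV : e ∈ V) (hce : 0 < c e)
    (hQV : Q ⊆ V) (hXV : Xf ⊆ V)
    (heQ : e ∉ Q) (heX : e ∉ Xf)
    (hnokX : ¬ (f Xf / B ≤ marg f e Xf / c e))
    (hI1 : f (Q ∪ Xf) ≤ (1 + cost c (Q \ Xf) / B) * f Xf + GY) :
    f (insert e Q ∪ Xf) ≤ (1 + cost c (insert e Q \ Xf) / B) * f Xf + GY := by
  have hQXV : Q ∪ Xf ⊆ V := Finset.union_subset hQV hXV
  have hddX : f (insert e (Q ∪ Xf)) - f (Q ∪ Xf) ≤ marg f e Xf :=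
    hsub Xf (Q ∪ Xf) Finset.subset_union_right hQXV e heV (by simp [heQ, heX])
  have e1 : insert e Q ∪ Xf = insert e (Q ∪ Xf) := Finset.insert_union _ _ _
  have e2 : insert e Q \ Xf = insert e (Q \ Xf) := by
    ext x
    simp only [Finset.mem_sdiff, Finset.mem_insert]
    constructor
    · rintro ⟨hx1 | hx1, hx2⟩
      · exact Or.inl hx1
      · exact Or.inr ⟨hx1, hx2⟩
    · rintro (hx | ⟨hx1, hx2⟩)
      · exact ⟨Or.inl hx, hx ▸ heX⟩
      · exact ⟨Or.inr hx1, hx2⟩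
  have heQX : e ∉ Q \ Xf := by simp [heQ]
  rw [e1, e2, cost_insert'' c heQX]
  push_neg at hnokX
  have h3 : marg f e Xf * B < f Xf * c e := by
    have := (div_lt_div_iff₀ hce hB).mp hnokX
    linarith
  have h4 : marg f e Xf ≤ (c e / B) * f Xf := by
    rw [div_mul_eq_mul_div, le_div_iff₀ hB]
    nlinarith
  have hring : (1 + (c e + cost c (Q \ Xf)) / B) * f Xf
      = (1 + cost c (Q \ Xf) / B) * f Xf + (c e / B) * f Xf := by ring
  rw [hring]
  linarith

end step

set_option maxHeartbeats 2000000 in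
lemma la_inv {α : Type*} [DecidableEq α]
    (V : Finset α) (f : Finset α → ℝ) (c : α → ℝ) (B : ℝ) (hB : 0 < B)
    (hnonneg : ∀ S, S ⊆ V → 0 ≤ f S)
    (hsub : ∀ A B' : Finset α, A ⊆ B' → B' ⊆ V → ∀ e ∈ V, e ∉ B' →
      f (insert e B') - f B' ≤ f (insert e A) - f A)
    (hc : ∀ e ∈ V, 0 < c e ∧ c e ≤ B)
    (O : Finset α) (hOV : O ⊆ V) :
    ∀ r : List α, r.Nodup → (∀ a ∈ r, a ∈ V) →
    ∀ (X Y : List α) (GX GY : ℝ),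
      (∀ a ∈ r, a ∉ X.toFinset ∧ a ∉ Y.toFinset) →
      X.toFinset ⊆ V → Y.toFinset ⊆ V → Disjoint X.toFinset Y.toFinset →
      0 ≤ GX → GX ≤ f X.toFinset → 0 ≤ GY → GY ≤ f Y.toFinset →
      f ((O \ r.toFinset) ∪ X.toFinset) ≤
        (1 + cost c ((O \ r.toFinset) \ X.toFinset) / B) * f X.toFinset + GY →
      f ((O \ r.toFinset) ∪ Y.toFinset) ≤
        (1 + cost c ((O \ r.toFinset) \ Y.toFinset) / B) * f Y.toFinset + GX →
      (List.foldl (laStep f c B) (X, Y) r).1.toFinset ⊆ V ∧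
      (List.foldl (laStep f c B) (X, Y) r).2.toFinset ⊆ V ∧
      Disjoint (List.foldl (laStep f c B) (X, Y) r).1.toFinset
        (List.foldl (laStep f c B) (X, Y) r).2.toFinset ∧
      ∃ GX' GY' : ℝ, 0 ≤ GX' ∧ GX' ≤ f (List.foldl (laStep f c B) (X, Y) r).1.toFinset ∧
        0 ≤ GY' ∧ GY' ≤ f (List.foldl (laStep f c B) (X, Y) r).2.toFinset ∧
        f (O ∪ (List.foldl (laStep f c B) (X, Y) r).1.toFinset) ≤
          (1 + cost c (O \ (List.foldl (laStep f c B) (X, Y) r).1.toFinset) / B) *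
            f (List.foldl (laStep f c B) (X, Y) r).1.toFinset + GY' ∧
        f (O ∪ (List.foldl (laStep f c B) (X, Y) r).2.toFinset) ≤
          (1 + cost c (O \ (List.foldl (laStep f c B) (X, Y) r).2.toFinset) / B) *
            f (List.foldl (laStep f c B) (X, Y) r).2.toFinset + GX' := by
  intro r
  induction r with
  | nil =>
    intro _ _ X Y GX GY _ hXV hYV hdisj hGX0 hGXle hGY0 hGYle hI1 hI2
    simp only [List.foldl_nil, List.toFinset_nil, Finset.sdiff_empty] at *
    exact ⟨hXV, hYV, hdisj, GX, GY, hGX0, hGXle, hGY0, hGYle, hI1, hI2⟩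
  | cons e r' ih =>
    intro hnd hrV X Y GX GY hfresh hXV hYV hdisj hGX0 hGXle hGY0 hGYle hI1 hI2
    have heV : e ∈ V := hrV e (List.mem_cons_self)
    have hce : 0 < c e := (hc e heV).1
    have heX : e ∉ X.toFinset := (hfresh e (List.mem_cons_self)).1
    have heY : e ∉ Y.toFinset := (hfresh e (List.mem_cons_self)).2
    have hnd' : r'.Nodup := hnd.of_cons
    have her' : e ∉ r' := by
      have := hnd; rw [List.nodup_cons] at this; exact this.1
    have hrV' : ∀ a ∈ r', a ∈ V := fun a ha => hrV a (List.mem_cons_of_mem _ ha)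
    -- Q and Q'
    set Q : Finset α := O \ (e :: r').toFinset with hQdef
    have heQ : e ∉ Q := by simp [hQdef]
    have hQV : Q ⊆ V := (Finset.sdiff_subset).trans hOV
    have hQ'in : e ∈ O → O \ r'.toFinset = insert e Q := by
      intro heO
      ext x
      simp only [hQdef, Finset.mem_sdiff, Finset.mem_insert, List.mem_toFinset,
        List.toFinset_cons, Finset.mem_insert]
      constructor
      · rintro ⟨hxO, hxr⟩
        by_cases hx : x = e
        · exact Or.inl hx
        · exact Or.inr ⟨hxO, by simp [hx, hxr]⟩
      · rintro (hx | ⟨hxO, hx2⟩)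
        · exact ⟨hx ▸ heO, hx ▸ her'⟩
        · push_neg at hx2
          exact ⟨hxO, hx2.2⟩
    have hQ'out : e ∉ O → O \ r'.toFinset = Q := by
      intro heO
      ext x
      simp only [hQdef, Finset.mem_sdiff, List.mem_toFinset, List.toFinset_cons,
        Finset.mem_insert]
      constructor
      · rintro ⟨hxO, hxr⟩
        exact ⟨hxO, by push_neg; exact ⟨fun h => heO (h ▸ hxO), hxr⟩⟩
      · rintro ⟨hxO, hx2⟩
        push_neg at hx2
        exact ⟨hxO, hx2.2⟩
    have hfX : 0 ≤ f X.toFinset := hnonneg _ hXV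
    have hfY : 0 ≤ f Y.toFinset := hnonneg _ hYV
    have hcpos : ∀ x ∈ V, 0 ≤ c x := fun x hx => (hc x hx).1.le
    have hkX : 0 ≤ cost c (Q \ X.toFinset) :=
      cost_nonneg'' c _ (fun x hx => hcpos x (hQV (Finset.sdiff_subset hx)))
    have hkY : 0 ≤ cost c (Q \ Y.toFinset) :=
      cost_nonneg'' c _ (fun x hx => hcpos x (hQV (Finset.sdiff_subset hx)))
    rw [List.foldl_cons]
    by_cases hc1 : (f X.toFinset / B ≤ marg f e X.toFinset / c e) ∧
        (marg f e Y.toFinset / c e ≤ marg f e X.toFinset / c e ∨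
          ¬ (f Y.toFinset / B ≤ marg f e Y.toFinset / c e))
    · -- e is added to X
      have hstep : laStep f c B (X, Y) e = (X ++ [e], Y) := by
        simp only [laStep]
        rw [if_pos hc1]
      rw [hstep]
      obtain ⟨hg0, hb, hcc, hd⟩ := la_add_ineq V f c B hB hsub Q X.toFinset Y.toFinset
        GX GY e heV hce hQV hXV hYV heQ heX heY hfX hfY hkX hkY hc1.1 hc1.2 hI1 hI2
      have hXe : (X ++ [e]).toFinset = insert e X.toFinset := by
        ext x; simp only [List.toFinset_append, Finset.mem_union, List.mem_toFinset, List.mem_singleton, Finset.mem_insert]; tauto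
      have happ : ∀ a ∈ r', a ∉ (X ++ [e]).toFinset ∧ a ∉ Y.toFinset := by
        intro a ha
        rw [hXe]
        refine ⟨?_, (hfresh a (List.mem_cons_of_mem _ ha)).2⟩
        simp only [Finset.mem_insert, not_or]
        exact ⟨fun h => her' (h ▸ ha), (hfresh a (List.mem_cons_of_mem _ ha)).1⟩
      have hXV' : (X ++ [e]).toFinset ⊆ V := by
        rw [hXe]; exact Finset.insert_subset heV hXV
      have hdisj' : Disjoint (X ++ [e]).toFinset Y.toFinset := by
        rw [hXe, Finset.disjoint_insert_left]
        exact ⟨heY, hdisj⟩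
      by_cases heO : e ∈ O
      · refine ih hnd' hrV' (X ++ [e]) Y (GX + marg f e X.toFinset) GY happ hXV' hYV hdisj'
          (by linarith) ?_ hGY0 hGYle ?_ ?_
        · rw [hXe]
          have : f (insert e X.toFinset) = f X.toFinset + marg f e X.toFinset := by
            simp [marg]
          linarith
        · rw [hQ'in heO, hXe]; exact hcc
        · rw [hQ'in heO]; exact hd
      · refine ih hnd' hrV' (X ++ [e]) Y GX GY happ hXV' hYV hdisj'
          hGX0 ?_ hGY0 hGYle ?_ ?_
        · rw [hXe]
          have : f (insert e X.toFinset) = f X.toFinset + marg f e X.toFinset := by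
            simp [marg]
          linarith
        · rw [hQ'out heO, hXe]; exact hb
        · rw [hQ'out heO]; exact hI2
    · by_cases hc2 : f Y.toFinset / B ≤ marg f e Y.toFinset / c e
      · -- e is added to Y
        have hstep : laStep f c B (X, Y) e = (X, Y ++ [e]) := by
          simp only [laStep]
          rw [if_neg hc1, if_pos hc2]
        rw [hstep]
        have hsel : marg f e X.toFinset / c e ≤ marg f e Y.toFinset / c e ∨
            ¬ (f X.toFinset / B ≤ marg f e X.toFinset / c e) := by
          by_cases hokX : f X.toFinset / B ≤ marg f e X.toFinset / c e
          · left
            by_contra h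
            push_neg at h
            exact hc1 ⟨hokX, Or.inl h.le⟩
          · right; exact hokX
        obtain ⟨hg0, hb, hcc, hd⟩ := la_add_ineq V f c B hB hsub Q Y.toFinset X.toFinset
          GY GX e heV hce hQV hYV hXV heQ heY heX hfY hfX hkY hkX hc2 hsel hI2 hI1
        have hYe : (Y ++ [e]).toFinset = insert e Y.toFinset := by
          ext x; simp only [List.toFinset_append, Finset.mem_union, List.mem_toFinset, List.mem_singleton, Finset.mem_insert]; tauto
        have happ : ∀ a ∈ r', a ∉ X.toFinset ∧ a ∉ (Y ++ [e]).toFinset := by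
          intro a ha
          rw [hYe]
          refine ⟨(hfresh a (List.mem_cons_of_mem _ ha)).1, ?_⟩
          simp only [Finset.mem_insert, not_or]
          exact ⟨fun h => her' (h ▸ ha), (hfresh a (List.mem_cons_of_mem _ ha)).2⟩
        have hYV' : (Y ++ [e]).toFinset ⊆ V := by
          rw [hYe]; exact Finset.insert_subset heV hYV
        have hdisj' : Disjoint X.toFinset (Y ++ [e]).toFinset := by
          rw [hYe, Finset.disjoint_insert_right]
          exact ⟨heX, hdisj⟩
        by_cases heO : e ∈ O
        · refine ih hnd' hrV' X (Y ++ [e]) GX (GY + marg f e Y.toFinset) happ hXV hYV' hdisj'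
            hGX0 hGXle (by linarith) ?_ ?_ ?_
          · rw [hYe]
            have : f (insert e Y.toFinset) = f Y.toFinset + marg f e Y.toFinset := by
              simp [marg]
            linarith
          · rw [hQ'in heO]; exact hd
          · rw [hQ'in heO, hYe]; exact hcc
        · refine ih hnd' hrV' X (Y ++ [e]) GX GY happ hXV hYV' hdisj'
            hGX0 hGXle hGY0 ?_ ?_ ?_
          · rw [hYe]
            have : f (insert e Y.toFinset) = f Y.toFinset + marg f e Y.toFinset := by
              simp [marg]
            linarith
          · rw [hQ'out heO]; exact hI1
          · rw [hQ'out heO, hYe]; exact hb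
      · -- e is discarded
        have hstep : laStep f c B (X, Y) e = (X, Y) := by
          simp only [laStep]
          rw [if_neg hc1, if_neg hc2]
        rw [hstep]
        have hnokX : ¬ (f X.toFinset / B ≤ marg f e X.toFinset / c e) := by
          intro h
          exact hc1 ⟨h, Or.inr hc2⟩
        have happ : ∀ a ∈ r', a ∉ X.toFinset ∧ a ∉ Y.toFinset :=
          fun a ha => hfresh a (List.mem_cons_of_mem _ ha)
        by_cases heO : e ∈ O
        · refine ih hnd' hrV' X Y GX GY happ hXV hYV hdisj hGX0 hGXle hGY0 hGYle ?_ ?_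
          · rw [hQ'in heO]
            exact la_noadd_ineq V f c B hB hsub Q X.toFinset GY e heV hce hQV hXV heQ heX hnokX hI1
          · rw [hQ'in heO]
            exact la_noadd_ineq V f c B hB hsub Q Y.toFinset GX e heV hce hQV hYV heQ heY hc2 hI2
        · refine ih hnd' hrV' X Y GX GY happ hXV hYV hdisj hGX0 hGXle hGY0 hGYle ?_ ?_
          · rw [hQ'out heO]; exact hI1
          · rw [hQ'out heO]; exact hI2

/-- At the end of the main loop of algorithm `LA`, the constructed sets
`X` and `Y` are disjoint and satisfy `f(O1) ≤ 3 (f(X) + f(Y))`, where `O1` is an optimal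
solution of the problem restricted to `V1 = {e ∈ V : c(e) ≤ B/2}`. -/
theorem la_main_loop_bound {α : Type*} [DecidableEq α]
    (V : Finset α) (f : Finset α → ℝ) (c : α → ℝ) (B : ℝ) (hB : 0 < B)
    (hnonneg : ∀ S, S ⊆ V → 0 ≤ f S) (hnorm : f ∅ = 0)
    (hsub : ∀ A B' : Finset α, A ⊆ B' → B' ⊆ V → ∀ e ∈ V, e ∉ B' →
      f (insert e B') - f B' ≤ f (insert e A) - f A)
    (hc : ∀ e ∈ V, 0 < c e ∧ c e ≤ B)
    -- the fixed scanning order of `V1 = {e ∈ V : c(e) ≤ B/2}`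
    (l1 : List α) (hl1d : l1.Nodup)
    (hl1V : l1.toFinset = V.filter (fun e => c e ≤ B / 2))
    -- an optimal solution of the problem restricted to `V1`
    (O1 : Finset α) (hO1sub : O1 ⊆ V.filter (fun e => c e ≤ B / 2))
    (hO1c : cost c O1 ≤ B)
    (hO1opt : ∀ S ⊆ V.filter (fun e => c e ≤ B / 2), cost c S ≤ B → f S ≤ f O1) :
    Disjoint (laRun f c B l1).1.toFinset (laRun f c B l1).2.toFinset ∧
      f O1 ≤ 3 * (f (laRun f c B l1).1.toFinset + f (laRun f c B l1).2.toFinset) := by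
  classical
  have hOV : O1 ⊆ V := hO1sub.trans (Finset.filter_subset _ _)
  have hl1mem : ∀ a ∈ l1, a ∈ V := by
    intro a ha
    have : a ∈ l1.toFinset := List.mem_toFinset.mpr ha
    rw [hl1V] at this
    exact (Finset.mem_filter.mp this).1
  have hQ0 : O1 \ l1.toFinset = ∅ := by
    rw [Finset.sdiff_eq_empty_iff_subset, hl1V]
    exact hO1sub
  have hbase1 : f ((O1 \ l1.toFinset) ∪ (List.toFinset ([] : List α))) ≤
      (1 + cost c ((O1 \ l1.toFinset) \ (List.toFinset ([] : List α))) / B) *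
        f (List.toFinset ([] : List α)) + 0 := by
    simp [hQ0, hnorm, cost]
  have hmain := la_inv V f c B hB hnonneg hsub hc O1 hOV l1 hl1d hl1mem [] [] 0 0
    (by intro a _; simp) (by simp) (by simp) (by simp)
    le_rfl (by simp [hnorm]) le_rfl (by simp [hnorm]) hbase1 hbase1
  rw [laRun]
  obtain ⟨hXV, hYV, hdisj, GX', GY', hGX0, hGXle, hGY0, hGYle, hI1, hI2⟩ := hmain
  set Xf := (List.foldl (laStep f c B) ([], []) l1).1.toFinset with hXfdef
  set Yf := (List.foldl (laStep f c B) ([], []) l1).2.toFinset with hYfdef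
  refine ⟨hdisj, ?_⟩
  have hfX : 0 ≤ f Xf := hnonneg _ hXV
  have hfY : 0 ≤ f Yf := hnonneg _ hYV
  have hcpos : ∀ x ∈ O1, 0 ≤ c x := fun x hx => (hc x (hOV hx)).1.le
  have hcostX : cost c (O1 \ Xf) ≤ B :=
    le_trans (cost_mono'' c Finset.sdiff_subset hcpos) hO1c
  have hcostY : cost c (O1 \ Yf) ≤ B :=
    le_trans (cost_mono'' c Finset.sdiff_subset hcpos) hO1c
  have hkX : 0 ≤ cost c (O1 \ Xf) :=
    cost_nonneg'' c _ (fun x hx => hcpos x (Finset.sdiff_subset hx))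
  have hkY : 0 ≤ cost c (O1 \ Yf) :=
    cost_nonneg'' c _ (fun x hx => hcpos x (Finset.sdiff_subset hx))
  -- f(O1 ∪ Xf) ≤ 2 f Xf + f Yf
  have hdX : cost c (O1 \ Xf) / B ≤ 1 := by
    rw [div_le_one hB]; exact hcostX
  have hdY : cost c (O1 \ Yf) / B ≤ 1 := by
    rw [div_le_one hB]; exact hcostY
  have hOX : f (O1 ∪ Xf) ≤ 2 * f Xf + f Yf := by
    have h1 : (1 + cost c (O1 \ Xf) / B) * f Xf ≤ 2 * f Xf := by nlinarith
    linarith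
  have hOY : f (O1 ∪ Yf) ≤ 2 * f Yf + f Xf := by
    have h1 : (1 + cost c (O1 \ Yf) / B) * f Yf ≤ 2 * f Yf := by nlinarith
    linarith
  -- f O1 ≤ f (O1 ∪ Xf) + f (O1 ∪ Yf)
  have hXnY : ∀ x ∈ Xf, x ∉ Yf := fun x hx => Finset.disjoint_left.mp hdisj hx
  have hS : Xf \ (O1 ∪ Yf) ⊆ V := Finset.sdiff_subset.trans hXV
  have hsplit := submod_union V f hsub (Xf \ (O1 ∪ Yf)) hS O1 (O1 ∪ Yf)
    Finset.subset_union_left (Finset.union_subset hOV hYV) Finset.sdiff_disjoint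
  have e1 : (O1 ∪ Yf) ∪ (Xf \ (O1 ∪ Yf)) = O1 ∪ Xf ∪ Yf := by
    ext x
    simp only [Finset.mem_union, Finset.mem_sdiff, not_or]
    constructor
    · rintro ((hx | hx) | ⟨hx, _, _⟩) <;> tauto
    · rintro ((hx | hx) | hx)
      · tauto
      · by_cases hxO : x ∈ O1
        · tauto
        · exact Or.inr ⟨hx, hxO, hXnY x hx⟩
      · tauto
  have e2 : O1 ∪ (Xf \ (O1 ∪ Yf)) = O1 ∪ Xf := by
    ext x
    simp only [Finset.mem_union, Finset.mem_sdiff, not_or]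
    constructor
    · rintro (hx | ⟨hx, _, _⟩) <;> tauto
    · rintro (hx | hx)
      · tauto
      · by_cases hxO : x ∈ O1
        · tauto
        · exact Or.inr ⟨hx, hxO, hXnY x hx⟩
  rw [e1, e2] at hsplit
  have hUnn : 0 ≤ f (O1 ∪ Xf ∪ Yf) :=
    hnonneg _ (Finset.union_subset (Finset.union_subset hOV hXV) hYV)
  linarith
end

section
/- With parameters p = √2 − 1 and α = √(2 + 2√2), the (random) output S of algorithm LAR is always feasible (c(S) ≤ B) and satisfies opt ≤ 16.034 · E[f(S)], where opt = max{f(T) : T ⊆ V, c(T) ≤ B}; i.e., LAR is a randomized 16.034-approximation in expectation. -/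
open scoped BigOperators Classical

/-- The longest prefix of a list whose total cost is at most the given budget
(costs being positive, this is the prefix of maximal length fitting in the budget). -/
noncomputable def takeCost {α : Type*} (c : α → ℝ) : ℝ → List α → List α
  | _, [] => []
  | b, a :: t => if c a ≤ b then a :: takeCost c (b - c a) t else []

/-- The scan of algorithm `LAR`: starting from `S = ∅`, scan the given list once, adding
the current element `e` to `S` whenever `f(e|S)/c(e) ≥ α f(S)/B`.  The set `S` is kept as
a list in order of insertion (oldest first). -/
noncomputable def larScan {α : Type*} [DecidableEq α] (f : Finset α → ℝ) (c : α → ℝ)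
    (B a : ℝ) (L : List α) : List α :=
  L.foldl (fun S e =>
    if a * f S.toFinset / B ≤ marg f e S.toFinset / c e then S ++ [e] else S) []

/-- The output of algorithm `LAR` given the random sample `R ⊆ V1` (the realization of
`V_p`): scan the elements of `R` (in the fixed order given by `l1`), take `S'` to be the
largest number of most-recently-added elements of `S` of total cost at most `B`, and
return the better of `S'` and `{emax}`. -/
noncomputable def larOut {α : Type*} [DecidableEq α] (f : Finset α → ℝ) (c : α → ℝ)
    (B a : ℝ) (l1 : List α) (R : Finset α) (emax : α) : Finset α :=
  let S' := (takeCost c B (larScan f c B a (l1.filter (fun e => e ∈ R))).reverse).toFinset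
  if f S' ≤ f {emax} then {emax} else S'

set_option linter.unusedSectionVars false
set_option maxHeartbeats 2000000

namespace LAR
variable {α : Type*} [DecidableEq α]

lemma takeWhile_append_left (pq : α → Bool) :
    ∀ (l r : List α), (∃ y ∈ l, pq y = false) → (l ++ r).takeWhile pq = l.takeWhile pq
  | [], _, h => by simp at h
  | h :: t, r, hy => by
    rcases hy with ⟨y, hyl, hyf⟩
    by_cases hph : pq h = true
    · simp only [List.cons_append, List.takeWhile_cons, hph, if_true]
      have : y ∈ t := by
        rcases List.mem_cons.mp hyl with rfl | ht
        · rw [hph] at hyf; cases hyf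
        · exact ht
      rw [takeWhile_append_left pq t r ⟨y, this, hyf⟩]
    · simp only [Bool.not_eq_true] at hph
      simp [List.takeWhile_cons, hph]

lemma takeWhile_all_append (pq : α → Bool) :
    ∀ (l r : List α), (∀ y ∈ l, pq y = true) → (l ++ r).takeWhile pq = l ++ r.takeWhile pq
  | [], r, _ => rfl
  | h :: t, r, hall => by
    have hh := hall h (by simp)
    simp only [List.cons_append, List.takeWhile_cons, hh, if_true]
    rw [takeWhile_all_append pq t r (fun y hy => hall y (by simp [hy]))]

/-- `(Q ++ x :: rest).takeWhile (· ≠ x) = Q` when `x ∉ Q`. -/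
lemma takeWhile_ne_middle (x : α) (Q rest : List α) (hx : x ∉ Q) :
    (Q ++ x :: rest).takeWhile (fun y => y ≠ x) = Q := by
  rw [takeWhile_all_append _ Q (x :: rest)
      (fun y hy => by simp; exact fun h => hx (h ▸ hy))]
  simp [List.takeWhile_cons]

lemma takeWhile_takeWhile_ne (e e' : α) :
    ∀ (l : List α), e' ∈ l.takeWhile (fun y => y ≠ e) →
      (l.takeWhile (fun y => y ≠ e)).takeWhile (fun y => y ≠ e') =
        l.takeWhile (fun y => y ≠ e')
  | [], h => by simp at h
  | h :: t, hmem => by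
    by_cases hhe : h = e
    · subst hhe; simp [List.takeWhile_cons] at hmem
    · rw [List.takeWhile_cons, if_pos (by simp [hhe])] at hmem
      by_cases hhe' : h = e'
      · subst hhe'
        rw [List.takeWhile_cons, if_pos (by simp [hhe]), List.takeWhile_cons,
          if_neg (by simp), List.takeWhile_cons, if_neg (by simp)]
      · have hmem' : e' ∈ List.takeWhile (fun y => y ≠ e) t := by
          rcases List.mem_cons.mp hmem with rfl | hmem'
          · exact absurd rfl hhe'
          · exact hmem'
        rw [List.takeWhile_cons, if_pos (by simp [hhe]), List.takeWhile_cons,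
          if_pos (by simp [hhe']), List.takeWhile_cons, if_pos (by simp [hhe']),
          takeWhile_takeWhile_ne e e' t hmem']

/-- filter and takeWhile commute for the cut-element in the filter. -/
lemma filter_takeWhile_comm (q : α → Bool) (e : α) (hq : q e = true) :
    ∀ (l : List α),
      (l.filter q).takeWhile (fun y => y ≠ e) = (l.takeWhile (fun y => y ≠ e)).filter q
  | [] => rfl
  | h :: t => by
    by_cases hhe : h = e
    · subst hhe
      rw [List.filter_cons_of_pos hq, List.takeWhile_cons, if_neg (by simp),
        List.takeWhile_cons, if_neg (by simp)]
      simp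
    · by_cases hqh : q h = true
      · rw [List.filter_cons_of_pos hqh, List.takeWhile_cons, if_pos (by simp [hhe]),
          List.takeWhile_cons, if_pos (by simp [hhe]), List.filter_cons_of_pos hqh,
          filter_takeWhile_comm q e hq t]
      · rw [List.filter_cons_of_neg (by simp_all), List.takeWhile_cons,
          if_pos (by simp [hhe]), List.filter_cons_of_neg (by simp_all),
          filter_takeWhile_comm q e hq t]

lemma dropWhile_ne_eq_cons (e : α) :
    ∀ (l : List α), e ∈ l → l.dropWhile (fun y => y ≠ e) = e :: (l.dropWhile (fun y => y ≠ e)).tail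
  | [], h => by simp at h
  | h :: t, hmem => by
    by_cases hhe : h = e
    · subst hhe; rw [List.dropWhile_cons, if_neg (by simp)]
      rfl
    · have het : e ∈ t := by
        rcases List.mem_cons.mp hmem with rfl | ht; exact absurd rfl hhe; exact ht
      have hd : (h :: t).dropWhile (fun y => y ≠ e) = t.dropWhile (fun y => y ≠ e) := by
        rw [List.dropWhile_cons, if_pos (by simp [hhe])]
      rw [hd, dropWhile_ne_eq_cons e t het]
      simp

lemma not_mem_takeWhile_ne (e : α) (l : List α) : e ∉ l.takeWhile (fun y => y ≠ e) := by
  intro h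
  have := List.mem_takeWhile_imp h
  simp at this

noncomputable def lstep (f : Finset α → ℝ) (c : α → ℝ) (B a : ℝ) : List α → α → List α :=
  fun S e => if a * f S.toFinset / B ≤ marg f e S.toFinset / c e then S ++ [e] else S

/-- The big structural lemma about one scan. -/
lemma scan_spec (f : Finset α → ℝ) (c : α → ℝ) (B a : ℝ) (V : Finset α)
    (hB : 0 < B) (ha : 0 < a) (hnn : ∀ S, S ⊆ V → 0 ≤ f S) :
    ∀ (L P : List α), (L ++ P).Nodup → (∀ x ∈ L, x ∈ V ∧ 0 < c x) →
      P.toFinset ⊆ V → 0 ≤ f P.toFinset →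
      (∃ Q, L.foldl (lstep f c B a) P = P ++ Q ∧ Q.Sublist L) ∧
      (f P.toFinset ≤ f (L.foldl (lstep f c B a) P).toFinset) ∧
      (∀ e ∈ L, e ∈ (L.foldl (lstep f c B a) P).toFinset →
        (a * f ((L.takeWhile (fun y => y ≠ e)).foldl (lstep f c B a) P).toFinset / B ≤
          marg f e ((L.takeWhile (fun y => y ≠ e)).foldl (lstep f c B a) P).toFinset / c e) ∧
        (L.takeWhile (fun y => y ≠ e)).foldl (lstep f c B a) P =
          (L.foldl (lstep f c B a) P).takeWhile (fun y => y ≠ e)) ∧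
      (∀ e ∈ L, e ∉ (L.foldl (lstep f c B a) P).toFinset →
        ¬ (a * f ((L.takeWhile (fun y => y ≠ e)).foldl (lstep f c B a) P).toFinset / B ≤
          marg f e ((L.takeWhile (fun y => y ≠ e)).foldl (lstep f c B a) P).toFinset / c e)) ∧
      (f (L.foldl (lstep f c B a) P).toFinset = f P.toFinset +
        (L.map (fun e => if e ∈ (L.foldl (lstep f c B a) P).toFinset then
          marg f e ((L.takeWhile (fun y => y ≠ e)).foldl (lstep f c B a) P).toFinset
          else 0)).sum) := by
  intro L
  induction L with
  | nil =>
    intro P _ _ _ hP0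
    refine ⟨⟨[], by simp, List.Sublist.refl _⟩, le_refl _, by simp, by simp, by simp⟩
  | cons e L' ih =>
    intro P hnd hmem hPV hP0
    have heV : e ∈ V := (hmem e (by simp)).1
    have hce : 0 < c e := (hmem e (by simp)).2
    have hndL : (e :: L' ++ P).Nodup := hnd
    have hne_mem : e ∉ L' ++ P := by
      have := hndL
      rw [List.cons_append, List.nodup_cons] at this
      exact this.1
    have hnd' : (L' ++ P).Nodup := by
      have := hndL; rw [List.cons_append, List.nodup_cons] at this; exact this.2
    have heL' : e ∉ L' := fun h => hne_mem (List.mem_append.mpr (Or.inl h))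
    have heP : e ∉ P := fun h => hne_mem (List.mem_append.mpr (Or.inr h))
    -- the new accumulator
    set P' := lstep f c B a P e with hP'
    have hfold : (e :: L').foldl (lstep f c B a) P = L'.foldl (lstep f c B a) P' := rfl
    have hTrelhead : ((e :: L').takeWhile (fun y => y ≠ e)).foldl (lstep f c B a) P = P := by
      rw [List.takeWhile_cons, if_neg (by simp)]
      rfl
    by_cases hcond : a * f P.toFinset / B ≤ marg f e P.toFinset / c e
    · -- accepted
      have hP'eq : P' = P ++ [e] := by rw [hP', lstep, if_pos hcond]
      have hP'fin : P'.toFinset = insert e P.toFinset := by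
        rw [hP'eq]; simp [List.toFinset_append]
      have hmargnn : 0 ≤ marg f e P.toFinset := by
        have h1 : (0:ℝ) ≤ a * f P.toFinset / B := by positivity
        have h2 := le_trans h1 hcond
        rcases div_nonneg_iff.mp h2 with ⟨h, _⟩ | ⟨_, h3⟩
        · exact h
        · nlinarith
      have hfP' : f P'.toFinset = f P.toFinset + marg f e P.toFinset := by
        rw [hP'fin]; simp [marg]
      have hP'V : P'.toFinset ⊆ V := by
        rw [hP'fin]; exact Finset.insert_subset heV hPV
      have hP'0 : 0 ≤ f P'.toFinset := by rw [hfP']; linarith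
      have hP'mon : f P.toFinset ≤ f P'.toFinset := by rw [hfP']; linarith
      have hnd'' : (L' ++ P').Nodup := by
        rw [hP'eq]
        have hperm : (L' ++ (P ++ [e])).Perm (e :: (L' ++ P)) := by
          rw [← List.append_assoc]
          exact List.perm_append_singleton e (L' ++ P)
        exact hperm.nodup_iff.mpr hnd
      obtain ⟨IH1, IH2, IH3, IH4, IH5⟩ := ih P' hnd''
        (fun x hx => hmem x (by simp [hx])) hP'V hP'0
      obtain ⟨Q, hQ1, hQ2⟩ := IH1
      have hfinal : (e :: L').foldl (lstep f c B a) P = P ++ e :: Q := by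
        rw [hfold, hQ1, hP'eq, List.append_assoc]; rfl
      have hTrel : ∀ x ∈ L',
          ((e :: L').takeWhile (fun y => y ≠ x)).foldl (lstep f c B a) P =
          (L'.takeWhile (fun y => y ≠ x)).foldl (lstep f c B a) P' := by
        intro x hx
        have hxe : ¬ x = e := fun h => heL' (h ▸ hx)
        rw [List.takeWhile_cons, if_pos (by simp [Ne.symm hxe])]
        rfl
      have hememfin : e ∈ ((e :: L').foldl (lstep f c B a) P).toFinset := by
        rw [hfinal]; simp
      refine ⟨?_, ?_, ?_, ?_, ?_⟩
      · exact ⟨e :: Q, hfinal, List.Sublist.cons₂ e hQ2⟩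
      · rw [hfold]; exact le_trans hP'mon IH2
      · intro x hxL hxS
        rcases List.mem_cons.mp hxL with rfl | hxL'
        · refine ⟨by rw [hTrelhead]; exact hcond, ?_⟩
          rw [hTrelhead, hfinal, takeWhile_ne_middle x P Q heP]
        · have hxS' : x ∈ (L'.foldl (lstep f c B a) P').toFinset := by
            rw [hfold] at hxS; exact hxS
          have h3 := IH3 x hxL' hxS'
          rw [hTrel x hxL', hfold]
          exact h3
      · intro x hxL hxS
        rcases List.mem_cons.mp hxL with rfl | hxL'
        · exact absurd hememfin hxS
        · have hxS' : x ∉ (L'.foldl (lstep f c B a) P').toFinset := by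
            rw [hfold] at hxS; exact hxS
          rw [hTrel x hxL']
          exact IH4 x hxL' hxS'
      · rw [List.map_cons, List.sum_cons, if_pos hememfin, hTrelhead]
        have hmapeq : (L'.map (fun x => if x ∈ ((e :: L').foldl (lstep f c B a) P).toFinset then
            marg f x (((e :: L').takeWhile (fun y => y ≠ x)).foldl (lstep f c B a) P).toFinset
            else 0)) = (L'.map (fun x => if x ∈ (L'.foldl (lstep f c B a) P').toFinset then
            marg f x ((L'.takeWhile (fun y => y ≠ x)).foldl (lstep f c B a) P').toFinset
            else 0)) := by
          apply List.map_congr_left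
          intro x hx
          rw [hTrel x hx, hfold]
        rw [hmapeq, hfold, IH5, hfP']
        ring
    · -- rejected
      have hP'eq : P' = P := by rw [hP', lstep, if_neg hcond]
      rw [hP'eq] at hfold
      obtain ⟨IH1, IH2, IH3, IH4, IH5⟩ := ih P hnd'
        (fun x hx => hmem x (by simp [hx])) hPV hP0
      obtain ⟨Q, hQ1, hQ2⟩ := IH1
      have hfinal : (e :: L').foldl (lstep f c B a) P = P ++ Q := by rw [hfold, hQ1]
      have hTrel : ∀ x ∈ L',
          ((e :: L').takeWhile (fun y => y ≠ x)).foldl (lstep f c B a) P =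
          (L'.takeWhile (fun y => y ≠ x)).foldl (lstep f c B a) P := by
        intro x hx
        have hxe : ¬ x = e := fun h => heL' (h ▸ hx)
        have hPe : lstep f c B a P e = P := by rw [← hP', hP'eq]
        rw [List.takeWhile_cons, if_pos (by simp [Ne.symm hxe]), List.foldl_cons, hPe]
      have hemem : e ∉ ((e :: L').foldl (lstep f c B a) P).toFinset := by
        rw [hfinal]
        simp only [List.toFinset_append, Finset.mem_union, List.mem_toFinset]
        rintro (h | h)
        · exact heP h
        · exact heL' (hQ2.mem h)
      refine ⟨?_, ?_, ?_, ?_, ?_⟩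
      · exact ⟨Q, hfinal, hQ2.cons e⟩
      · rw [hfold]; exact IH2
      · intro x hxL hxS
        rcases List.mem_cons.mp hxL with rfl | hxL'
        · exact absurd hxS hemem
        · have h3 := IH3 x hxL' (by rw [hfold] at hxS; exact hxS)
          rw [hTrel x hxL', hfold]
          exact h3
      · intro x hxL hxS
        rcases List.mem_cons.mp hxL with rfl | hxL'
        · rw [hTrelhead]; exact hcond
        · rw [hTrel x hxL']
          exact IH4 x hxL' (by rw [hfold] at hxS; exact hxS)
      · rw [List.map_cons, List.sum_cons, if_neg hemem]
        have hmapeq : (L'.map (fun x => if x ∈ ((e :: L').foldl (lstep f c B a) P).toFinset then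
            marg f x (((e :: L').takeWhile (fun y => y ≠ x)).foldl (lstep f c B a) P).toFinset
            else 0)) = (L'.map (fun x => if x ∈ (L'.foldl (lstep f c B a) P).toFinset then
            marg f x ((L'.takeWhile (fun y => y ≠ x)).foldl (lstep f c B a) P).toFinset
            else 0)) := by
          apply List.map_congr_left
          intro x hx
          rw [hTrel x hx, hfold]
        rw [hmapeq, hfold, IH5]
        ring


lemma takeCost_spec (c : α → ℝ) :
    ∀ (L : List α) (b : ℝ), 0 ≤ b →
      ∃ k, k ≤ L.length ∧ takeCost c b L = L.take k ∧
        ((L.take k).map c).sum ≤ b ∧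
        (k = L.length ∨ b < ((L.take (k+1)).map c).sum)
  | [], b, hb => ⟨0, by simp, rfl, by simp [hb], Or.inl rfl⟩
  | x :: t, b, hb => by
    by_cases hx : c x ≤ b
    · obtain ⟨k, hk1, hk2, hk3, hk4⟩ := takeCost_spec c t (b - c x) (by linarith)
      refine ⟨k+1, by simpa using Nat.succ_le_succ hk1, ?_, ?_, ?_⟩
      · rw [takeCost, if_pos hx, hk2, List.take_succ_cons]
      · rw [List.take_succ_cons, List.map_cons, List.sum_cons]; linarith
      · rcases hk4 with h | h
        · exact Or.inl (by simp [h])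
        · refine Or.inr ?_
          rw [List.take_succ_cons, List.map_cons, List.sum_cons]; linarith
    · refine ⟨0, Nat.zero_le _, by rw [takeCost, if_neg hx, List.take_zero], by simp [hb], Or.inr ?_⟩
      simp only [List.take_succ_cons, List.take_zero, List.map_cons, List.map_nil,
        List.sum_cons, List.sum_nil, add_zero]
      linarith

/-- Modular (chain) lower bound for a submodular-like `g`. -/
lemma chain_bound (g : Finset α → ℝ) (U0 : Finset α)
    (hg : ∀ A B2 : Finset α, A ⊆ B2 → B2 ⊆ U0 → ∀ e ∈ U0, e ∉ B2 →
      g (insert e B2) - g B2 ≤ g (insert e A) - g A)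
    (l : List α) : l.Nodup → l.toFinset ⊆ U0 → ∀ S, S ⊆ l.toFinset →
      g ∅ + ∑ e ∈ S, (g (insert e ((l.takeWhile (fun y => y ≠ e)).toFinset)) -
        g ((l.takeWhile (fun y => y ≠ e)).toFinset)) ≤ g S := by
  induction l using List.reverseRecOn with
  | nil =>
    intro _ _ S hS
    simp only [List.toFinset_nil, Finset.subset_empty] at hS
    simp [hS]
  | append_singleton l' e ihl =>
    intro hnd hU S hS
    rw [List.nodup_append] at hnd
    have hnd' : l'.Nodup := hnd.1
    have hel' : e ∉ l' := by
      intro h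
      exact hnd.2.2 e h e (by simp) rfl
    have hU' : l'.toFinset ⊆ U0 := fun y hy => hU (by simp [List.mem_toFinset.mp hy])
    have heU0 : e ∈ U0 := hU (by simp)
    have hTW : ∀ x ∈ l'.toFinset,
        ((l' ++ [e]).takeWhile (fun y => y ≠ x)).toFinset =
        (l'.takeWhile (fun y => y ≠ x)).toFinset := by
      intro x hx
      rw [takeWhile_append_left _ l' [e] ⟨x, List.mem_toFinset.mp hx, by simp⟩]
    have hTWe : ((l' ++ [e]).takeWhile (fun y => y ≠ e)) = l' := by
      have := takeWhile_ne_middle e l' [] hel'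
      simpa using this
    by_cases heS : e ∈ S
    · have hSe : S.erase e ⊆ l'.toFinset := by
        intro y hy
        have hyS := Finset.mem_of_mem_erase hy
        have hyne := Finset.ne_of_mem_erase hy
        have := hS hyS
        simp only [List.toFinset_append, List.toFinset_cons, List.toFinset_nil,
          Finset.mem_union, List.mem_toFinset] at this
        rcases this with h | h
        · exact List.mem_toFinset.mpr h
        · simp at h; exact absurd h hyne
      have hsum : ∑ x ∈ S, (g (insert x (((l' ++ [e]).takeWhile (fun y => y ≠ x)).toFinset)) -
            g (((l' ++ [e]).takeWhile (fun y => y ≠ x)).toFinset)) =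
          ∑ x ∈ S.erase e, (g (insert x ((l'.takeWhile (fun y => y ≠ x)).toFinset)) -
            g ((l'.takeWhile (fun y => y ≠ x)).toFinset)) +
          (g (insert e l'.toFinset) - g l'.toFinset) := by
        rw [← Finset.sum_erase_add _ _ heS, hTWe]
        congr 1
        apply Finset.sum_congr rfl
        intro x hx
        rw [hTW x (hSe hx)]
      have h1 := ihl hnd' hU' (S.erase e) hSe
      have h2 : g (insert e l'.toFinset) - g l'.toFinset ≤ g (insert e (S.erase e)) - g (S.erase e) := by
        apply hg (S.erase e) l'.toFinset hSe hU' e heU0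
        rw [List.mem_toFinset]; exact hel'
      have h3 : insert e (S.erase e) = S := Finset.insert_erase heS
      have hgS : g S = g (insert e (S.erase e)) := by rw [h3]
      rw [hsum]
      linarith [h1, h2, hgS]
    · have hSl : S ⊆ l'.toFinset := by
        intro y hy
        have := hS hy
        simp only [List.toFinset_append, List.toFinset_cons, List.toFinset_nil,
          Finset.mem_union, List.mem_toFinset] at this
        rcases this with h | h
        · exact List.mem_toFinset.mpr h
        · simp at h; subst h; exact absurd hy heS
      have hsum : ∑ x ∈ S, (g (insert x (((l' ++ [e]).takeWhile (fun y => y ≠ x)).toFinset)) -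
            g (((l' ++ [e]).takeWhile (fun y => y ≠ x)).toFinset)) =
          ∑ x ∈ S, (g (insert x ((l'.takeWhile (fun y => y ≠ x)).toFinset)) -
            g ((l'.takeWhile (fun y => y ≠ x)).toFinset)) := by
        apply Finset.sum_congr rfl
        intro x hx
        rw [hTW x (hSl hx)]
      rw [hsum]
      exact ihl hnd' hU' S hSl

/-- Abel-summation lower bound. -/
lemma abel_bound (g : Finset α → ℝ) (x : α → ℝ) (p : ℝ) (hp : 0 ≤ p)
    (l : List α) : l.Nodup → List.Pairwise (fun u v => x v ≤ x u) l →
      (∀ X, X ⊆ l.toFinset → 0 ≤ g X) → (∀ e ∈ l, x e ≤ p) →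
      ∀ m, 0 ≤ m → m ≤ p → (∀ e ∈ l, m ≤ x e) →
      m * g l.toFinset - p * g ∅ ≤
        (l.map (fun e => x e * (g (insert e ((l.takeWhile (fun y => y ≠ e)).toFinset)) -
          g ((l.takeWhile (fun y => y ≠ e)).toFinset)))).sum := by
  induction l using List.reverseRecOn with
  | nil =>
    intro _ _ hg0 _ m _ hmp _
    have h0 : 0 ≤ g ∅ := hg0 ∅ (by simp)
    simp only [List.toFinset_nil, List.map_nil, List.sum_nil]
    nlinarith
  | append_singleton l' e ihl =>
    intro hnd hsort hg0 hxp m hm0 hmp hmx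
    rw [List.nodup_append] at hnd
    have hnd' : l'.Nodup := hnd.1
    have hel' : e ∉ l' := fun h => hnd.2.2 e h e (by simp) rfl
    have hTW : ∀ y ∈ l',
        ((l' ++ [e]).takeWhile (fun z => z ≠ y)).toFinset =
        (l'.takeWhile (fun z => z ≠ y)).toFinset := by
      intro y hy
      rw [takeWhile_append_left _ l' [e] ⟨y, hy, by simp⟩]
    have hTWe : ((l' ++ [e]).takeWhile (fun z => z ≠ e)) = l' := by
      have := takeWhile_ne_middle e l' [] hel'
      simpa using this
    have hsort2 := List.pairwise_append.mp hsort
    have hsort' : List.Pairwise (fun u v => x v ≤ x u) l' := hsort2.1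
    have hxe : ∀ y ∈ l', x e ≤ x y := fun y hy => hsort2.2.2 y hy e (by simp)
    have hg0' : ∀ X, X ⊆ l'.toFinset → 0 ≤ g X := by
      intro X hX
      apply hg0 X (hX.trans ?_)
      intro y hy; simp [List.mem_toFinset.mp hy]
    have hmap : (l' ++ [e]).map (fun y => x y *
          (g (insert y (((l' ++ [e]).takeWhile (fun z => z ≠ y)).toFinset)) -
            g (((l' ++ [e]).takeWhile (fun z => z ≠ y)).toFinset))) =
        (l'.map (fun y => x y * (g (insert y ((l'.takeWhile (fun z => z ≠ y)).toFinset)) -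
          g ((l'.takeWhile (fun z => z ≠ y)).toFinset)))) ++
        [x e * (g (insert e l'.toFinset) - g l'.toFinset)] := by
      rw [List.map_append]
      congr 1
      · apply List.map_congr_left
        intro y hy
        rw [hTW y hy]
      · rw [List.map_cons, List.map_nil, hTWe]
    rw [hmap, List.sum_append, List.sum_cons, List.sum_nil, add_zero]
    have hIH := ihl hnd' hsort' hg0' (fun y hy => hxp y (by simp [hy]))
      (x e) (le_trans hm0 (hmx e (by simp))) (hxp e (by simp)) hxe
    have hfin : insert e l'.toFinset = (l' ++ [e]).toFinset := by
      rw [List.toFinset_append]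
      simp only [List.toFinset_cons, List.toFinset_nil, LawfulSingleton.insert_empty_eq]
      rw [Finset.union_comm]
      rfl
    have hgful : 0 ≤ g ((l' ++ [e]).toFinset) := hg0 _ (le_refl _)
    have hxee : m ≤ x e := hmx e (by simp)
    rw [hfin]
    nlinarith [hIH]


/-- Total weight of the product-Bernoulli distribution. -/
lemma sum_w (p q : ℝ) (U : Finset α) :
    ∑ R ∈ U.powerset, p ^ R.card * q ^ (U.card - R.card) = (p + q) ^ U.card := by
  induction U using Finset.induction_on with
  | empty => simp
  | @insert e U he ih =>
    rw [Finset.sum_powerset_insert he]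
    have hcard : (insert e U).card = U.card + 1 := Finset.card_insert_of_notMem he
    have h1 : ∑ R ∈ U.powerset, p ^ R.card * q ^ ((insert e U).card - R.card) =
        q * ∑ R ∈ U.powerset, p ^ R.card * q ^ (U.card - R.card) := by
      rw [Finset.mul_sum]
      apply Finset.sum_congr rfl
      intro T hT
      have hTcard : T.card ≤ U.card := Finset.card_le_card (Finset.mem_powerset.mp hT)
      rw [hcard, Nat.succ_sub hTcard, pow_succ]
      ring
    have h2 : ∑ R ∈ U.powerset, p ^ (insert e R).card * q ^ ((insert e U).card - (insert e R).card) =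
        p * ∑ R ∈ U.powerset, p ^ R.card * q ^ (U.card - R.card) := by
      rw [Finset.mul_sum]
      apply Finset.sum_congr rfl
      intro T hT
      have hTU : T ⊆ U := Finset.mem_powerset.mp hT
      have heT : e ∉ T := fun h => he (hTU h)
      rw [Finset.card_insert_of_notMem heT, hcard]
      have : U.card + 1 - (T.card + 1) = U.card - T.card := by omega
      rw [this, pow_succ]
      ring
    rw [h1, h2, ih, hcard, pow_succ]
    ring

/-- Key independence identity for a single element. -/
lemma sum_w_ite (p : ℝ) (U : Finset α) (e : α) (he : e ∈ U) (φ : Finset α → ℝ)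
    (hφ : ∀ R, φ R = φ (R.erase e)) :
    ∑ R ∈ U.powerset, p ^ R.card * (1-p) ^ (U.card - R.card) * (if e ∈ R then φ R else 0)
      = p * ∑ R ∈ U.powerset, p ^ R.card * (1-p) ^ (U.card - R.card) * φ R := by
  have hU : insert e (U.erase e) = U := Finset.insert_erase he
  have heU' : e ∉ U.erase e := Finset.notMem_erase e U
  rw [← hU, Finset.sum_powerset_insert heU', Finset.sum_powerset_insert heU']
  have hcard : (insert e (U.erase e)).card = (U.erase e).card + 1 :=
    Finset.card_insert_of_notMem heU'
  have hkey : ∀ T ∈ (U.erase e).powerset, φ (insert e T) = φ T := by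
    intro T hT
    have hTU : T ⊆ U.erase e := Finset.mem_powerset.mp hT
    have heT : e ∉ T := fun h => heU' (hTU h)
    rw [hφ (insert e T), Finset.erase_insert heT]
  have hz : ∀ T ∈ (U.erase e).powerset,
      p ^ T.card * (1-p) ^ ((insert e (U.erase e)).card - T.card) * (if e ∈ T then φ T else 0) = 0 := by
    intro T hT
    have hTU : T ⊆ U.erase e := Finset.mem_powerset.mp hT
    have heT : e ∉ T := fun h => heU' (hTU h)
    rw [if_neg heT, mul_zero]
  rw [Finset.sum_congr rfl hz, Finset.sum_const_zero, zero_add]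
  rw [mul_add, Finset.mul_sum, Finset.mul_sum]
  have hL : ∀ T ∈ (U.erase e).powerset,
      p ^ (insert e T).card * (1-p) ^ ((insert e (U.erase e)).card - (insert e T).card) *
        (if e ∈ insert e T then φ (insert e T) else 0) =
      p * (p ^ T.card * (1-p) ^ ((U.erase e).card - T.card) * φ T) := by
    intro T hT
    have hTU : T ⊆ U.erase e := Finset.mem_powerset.mp hT
    have heT : e ∉ T := fun h => heU' (hTU h)
    rw [if_pos (Finset.mem_insert_self e T), hkey T hT, Finset.card_insert_of_notMem heT, hcard]
    have : (U.erase e).card + 1 - (T.card + 1) = (U.erase e).card - T.card := by omega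
    rw [this, pow_succ]
    ring
  rw [Finset.sum_congr rfl hL]
  have hR1 : ∀ T ∈ (U.erase e).powerset,
      p * (p ^ T.card * (1-p) ^ ((insert e (U.erase e)).card - T.card) * φ T) =
      (1-p) * (p * (p ^ T.card * (1-p) ^ ((U.erase e).card - T.card) * φ T)) := by
    intro T hT
    have hTcard : T.card ≤ (U.erase e).card := Finset.card_le_card (Finset.mem_powerset.mp hT)
    rw [hcard, Nat.succ_sub hTcard, pow_succ]
    ring
  have hR2 : ∀ T ∈ (U.erase e).powerset,
      p * (p ^ (insert e T).card * (1-p) ^ ((insert e (U.erase e)).card - (insert e T).card) *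
        φ (insert e T)) =
      p * (p * (p ^ T.card * (1-p) ^ ((U.erase e).card - T.card) * φ T)) := by
    intro T hT
    have hTU : T ⊆ U.erase e := Finset.mem_powerset.mp hT
    have heT : e ∉ T := fun h => heU' (hTU h)
    rw [hkey T hT, Finset.card_insert_of_notMem heT, hcard]
    have : (U.erase e).card + 1 - (T.card + 1) = (U.erase e).card - T.card := by omega
    rw [this, pow_succ]
    ring
  rw [Finset.sum_congr rfl hR1, Finset.sum_congr rfl hR2]
  rw [← Finset.sum_add_distrib]
  apply Finset.sum_congr rfl
  intro T hT
  ring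

/-- Expansion bound: `f(A ∪ B) ≤ f(B) + Σ_{e∈A\B} marg f e B`. -/
lemma submod_expand (f : Finset α → ℝ) (V : Finset α)
    (hsub : ∀ A B' : Finset α, A ⊆ B' → B' ⊆ V → ∀ e ∈ V, e ∉ B' →
      f (insert e B') - f B' ≤ f (insert e A) - f A)
    (A : Finset α) : A ⊆ V → ∀ B2, B2 ⊆ V →
      f (A ∪ B2) ≤ f B2 + ∑ e ∈ A \ B2, marg f e B2 := by
  induction A using Finset.induction_on with
  | empty => intro _ B2 _; simp
  | @insert x A hx ih =>
    intro hAV B2 hB2V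
    have hxV : x ∈ V := hAV (Finset.mem_insert_self x A)
    have hAV' : A ⊆ V := fun y hy => hAV (Finset.mem_insert_of_mem hy)
    by_cases hxB : x ∈ B2
    · have h1 : insert x A ∪ B2 = A ∪ B2 := by
        rw [Finset.insert_union]
        exact Finset.insert_eq_self.mpr (Finset.mem_union_right A hxB)
      have h2 : insert x A \ B2 = A \ B2 := by
        rw [Finset.insert_sdiff_of_mem A hxB]
      rw [h1, h2]
      exact ih hAV' B2 hB2V
    · have h1 : insert x A ∪ B2 = insert x (A ∪ B2) := Finset.insert_union x A B2
      have h2 : insert x A \ B2 = insert x (A \ B2) :=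
        Finset.insert_sdiff_of_notMem A hxB
      have hxAB : x ∉ A ∪ B2 := by
        simp only [Finset.mem_union]
        rintro (h | h)
        · exact hx h
        · exact hxB h
      have h3 : f (insert x (A ∪ B2)) - f (A ∪ B2) ≤ f (insert x B2) - f B2 :=
        hsub B2 (A ∪ B2) (Finset.subset_union_right) (Finset.union_subset hAV' hB2V) x hxV hxAB
      have h4 : x ∉ A \ B2 := fun h => hx (Finset.mem_sdiff.mp h).1
      rw [h1, h2, Finset.sum_insert h4]
      have h5 := ih hAV' B2 hB2V
      have : marg f x B2 = f (insert x B2) - f B2 := rfl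
      have h6 : f (insert x (A ∪ B2)) ≤ f (A ∪ B2) + marg f x B2 := by
        rw [this]; linarith
      linarith

/-- Telescoping identity for building a set along a list. -/
lemma tele (f : Finset α → ℝ) (l : List α) : ∀ (P : Finset α), l.Nodup → (∀ x ∈ l, x ∉ P) →
    f (P ∪ l.toFinset) = f P +
      (l.map (fun e => marg f e (P ∪ ((l.takeWhile (fun y => y ≠ e)).toFinset)))).sum := by
  induction l with
  | nil => intro P _ _; simp
  | cons x t ih =>
    intro P hnd hP
    have hxt : x ∉ t := (List.nodup_cons.mp hnd).1
    have hnd' : t.Nodup := (List.nodup_cons.mp hnd).2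
    have hP' : ∀ y ∈ t, y ∉ insert x P := by
      intro y hy
      simp only [Finset.mem_insert]
      rintro (h | h)
      · exact hxt (h ▸ hy)
      · exact hP y (by simp [hy]) h
    have hunion : P ∪ (x :: t).toFinset = insert x P ∪ t.toFinset := by
      simp only [List.toFinset_cons]
      rw [Finset.union_insert, Finset.insert_union]
    rw [hunion, ih (insert x P) hnd' hP', List.map_cons, List.sum_cons]
    have hhead : ((x :: t).takeWhile (fun y => y ≠ x)) = [] := by
      rw [List.takeWhile_cons, if_neg (by simp)]
    have hmap : (t.map (fun e => marg f e (P ∪ (((x :: t).takeWhile (fun y => y ≠ e)).toFinset)))) =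
        (t.map (fun e => marg f e (insert x P ∪ ((t.takeWhile (fun y => y ≠ e)).toFinset)))) := by
      apply List.map_congr_left
      intro y hy
      have hxy : ¬ x = y := fun h => hxt (h ▸ hy)
      rw [List.takeWhile_cons, if_pos (by simp [hxy])]
      simp only [List.toFinset_cons]
      rw [Finset.union_insert, Finset.insert_union]
    rw [hmap]
    have : f (insert x P) = f P + marg f x P := by simp [marg]
    rw [hhead]
    simp only [List.toFinset_nil, Finset.union_empty]
    linarith

/-- BFNS-type lemma: if every element is in the random set `D ω` with probability at
most `p`, then `E[g(D)] ≥ (1−p) g(∅)` for `g` non-negative submodular. -/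
lemma bfns (g : Finset α → ℝ) (U0 : Finset α)
    (hg : ∀ A B2 : Finset α, A ⊆ B2 → B2 ⊆ U0 → ∀ e ∈ U0, e ∉ B2 →
      g (insert e B2) - g B2 ≤ g (insert e A) - g A)
    (hg0 : ∀ X, X ⊆ U0 → 0 ≤ g X)
    (Ω : Finset (Finset α)) (w : Finset α → ℝ)
    (hw0 : ∀ ω ∈ Ω, 0 ≤ w ω) (hw1 : ∑ ω ∈ Ω, w ω = 1)
    (D : Finset α → Finset α) (hD : ∀ ω ∈ Ω, D ω ⊆ U0)
    (l : List α) (hld : l.Nodup) (hlU : l.toFinset = U0)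
    (p : ℝ) (hp : 0 ≤ p)
    (hx : ∀ e ∈ U0, ∑ ω ∈ Ω, w ω * (if e ∈ D ω then (1:ℝ) else 0) ≤ p) :
    (1 - p) * g ∅ ≤ ∑ ω ∈ Ω, w ω * g (D ω) := by
  classical
  set x : α → ℝ := fun e => ∑ ω ∈ Ω, w ω * (if e ∈ D ω then (1:ℝ) else 0) with hxdef
  have hx0 : ∀ e, 0 ≤ x e := by
    intro e
    apply Finset.sum_nonneg
    intro ω hω
    have := hw0 ω hω
    by_cases h : e ∈ D ω <;> simp [h] <;> linarith
  set r : α → α → Prop := fun u v => x v ≤ x u with hrdef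
  haveI : DecidableRel r := fun u v => Classical.dec _
  haveI : Std.Total r := ⟨fun u v => le_total (x v) (x u)⟩
  haveI : IsTrans α r := ⟨fun u v z h1 h2 => le_trans h2 h1⟩
  set l' : List α := List.insertionSort r l with hl'def
  have hperm : l'.Perm l := List.perm_insertionSort r l
  have hl'd : l'.Nodup := hperm.nodup_iff.mpr hld
  have hl'U : l'.toFinset = U0 := by rw [List.toFinset_eq_of_perm _ _ hperm, hlU]
  have hl'sort : List.Pairwise r l' := List.pairwise_insertionSort r l
  set cc : α → ℝ := fun e => g (insert e ((l'.takeWhile (fun y => y ≠ e)).toFinset)) -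
    g ((l'.takeWhile (fun y => y ≠ e)).toFinset) with hccdef
  have hchain : ∀ ω ∈ Ω, g ∅ + ∑ e ∈ D ω, cc e ≤ g (D ω) := by
    intro ω hω
    exact chain_bound g U0 hg l' hl'd (by rw [hl'U]) (D ω) (by rw [hl'U]; exact hD ω hω)
  have habel : (0:ℝ) * g l'.toFinset - p * g ∅ ≤ (l'.map (fun e => x e * cc e)).sum := by
    apply abel_bound g x p hp l' hl'd hl'sort
    · intro X hX; exact hg0 X (by rw [← hl'U]; exact hX)
    · intro e he; exact hx e (by rw [← hl'U]; simp [he])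
    · exact le_refl 0
    · exact hp
    · intro e _; exact hx0 e
  have h1 : ∑ ω ∈ Ω, w ω * (g ∅ + ∑ e ∈ D ω, cc e) ≤ ∑ ω ∈ Ω, w ω * g (D ω) := by
    apply Finset.sum_le_sum
    intro ω hω
    exact mul_le_mul_of_nonneg_left (hchain ω hω) (hw0 ω hω)
  have hDrw : ∀ ω ∈ Ω, ∑ e ∈ D ω, cc e = ∑ e ∈ U0, (if e ∈ D ω then cc e else 0) := by
    intro ω hω
    rw [Finset.sum_ite_mem, Finset.inter_eq_right.mpr (hD ω hω)]
  have h2 : ∑ ω ∈ Ω, w ω * (g ∅ + ∑ e ∈ D ω, cc e) = g ∅ + ∑ e ∈ U0, cc e * x e := by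
    have hstep : ∀ ω ∈ Ω, w ω * (g ∅ + ∑ e ∈ D ω, cc e) =
        w ω * g ∅ + ∑ e ∈ U0, (if e ∈ D ω then w ω * cc e else 0) := by
      intro ω hω
      rw [hDrw ω hω, mul_add, Finset.mul_sum]
      congr 1
      apply Finset.sum_congr rfl
      intro e _
      by_cases h : e ∈ D ω <;> simp [h, mul_comm]
    rw [Finset.sum_congr rfl hstep, Finset.sum_add_distrib, ← Finset.sum_mul, hw1, one_mul,
      Finset.sum_comm]
    congr 1
    apply Finset.sum_congr rfl
    intro e _
    rw [hxdef, Finset.mul_sum]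
    apply Finset.sum_congr rfl
    intro ω _
    by_cases h : e ∈ D ω <;> simp [h, mul_comm]
  have h3 : ∑ e ∈ U0, cc e * x e = (l'.map (fun e => x e * cc e)).sum := by
    rw [← hl'U, List.sum_toFinset _ hl'd]
    apply congrArg List.sum
    apply List.map_congr_left
    intro e _
    exact mul_comm _ _
  have hgempty : 0 ≤ g ∅ := hg0 ∅ (Finset.empty_subset _)
  rw [zero_mul, zero_sub] at habel
  rw [h2, h3] at h1
  linarith

end LAR

noncomputable def larScan' {α : Type*} [DecidableEq α] (f : Finset α → ℝ) (c : α → ℝ)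
    (B a : ℝ) (L : List α) : List α := L.foldl (LAR.lstep f c B a) []

namespace LAR
variable {α : Type*} [DecidableEq α]


/-- scan of the part of the stream before `e`. -/
noncomputable def Tl (f : Finset α → ℝ) (c : α → ℝ) (B a : ℝ) (l1 : List α)
    (e : α) (R : Finset α) : List α :=
  ((l1.takeWhile (fun y => y ≠ e)).filter (fun x => x ∈ R)).foldl (lstep f c B a) []

/-- the marginal of `e` with respect to the state of the scan just before `e`. -/
noncomputable def MT (f : Finset α → ℝ) (c : α → ℝ) (B a : ℝ) (l1 : List α)
    (e : α) (R : Finset α) : ℝ := marg f e (Tl f c B a l1 e R).toFinset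

lemma listsum_to_finset (g : α → ℝ) (L : List α) (hnd : L.Nodup) (S : Finset α)
    (hS : S ⊆ L.toFinset) :
    (L.map (fun e => if e ∈ S then g e else 0)).sum = ∑ e ∈ S, g e := by
  rw [← List.sum_toFinset _ hnd, Finset.sum_ite_mem, Finset.inter_eq_right.mpr hS]

lemma run_facts (f : Finset α → ℝ) (c : α → ℝ) (B a : ℝ) (V : Finset α)
    (hB : 0 < B) (ha : 0 < a)
    (hnn : ∀ S, S ⊆ V → 0 ≤ f S) (hnorm : f ∅ = 0)
    (hsub : ∀ A B' : Finset α, A ⊆ B' → B' ⊆ V → ∀ e ∈ V, e ∉ B' →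
      f (insert e B') - f B' ≤ f (insert e A) - f A)
    (l1 : List α) (hl1d : l1.Nodup)
    (hl1m : ∀ x ∈ l1, x ∈ V ∧ 0 < c x ∧ c x ≤ B / 2)
    (R : Finset α) :
    (∀ x ∈ (larScan' f c B a (l1.filter (fun e => e ∈ R))).toFinset, x ∈ R ∧ x ∈ l1) ∧
    (f (larScan' f c B a (l1.filter (fun e => e ∈ R))).toFinset =
      ∑ e ∈ (larScan' f c B a (l1.filter (fun e => e ∈ R))).toFinset, MT f c B a l1 e R) ∧
    (∀ e ∈ (larScan' f c B a (l1.filter (fun e => e ∈ R))).toFinset,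
      a * c e * f (Tl f c B a l1 e R).toFinset / B ≤ MT f c B a l1 e R) ∧
    (∀ e ∈ l1, e ∈ R → e ∉ (larScan' f c B a (l1.filter (fun e => e ∈ R))).toFinset →
      MT f c B a l1 e R < a * c e * f (Tl f c B a l1 e R).toFinset / B) ∧
    (∀ e ∈ l1, (Tl f c B a l1 e R).toFinset ⊆
        (larScan' f c B a (l1.filter (fun e => e ∈ R))).toFinset ∧
      0 ≤ f (Tl f c B a l1 e R).toFinset ∧
      f (Tl f c B a l1 e R).toFinset ≤
        f (larScan' f c B a (l1.filter (fun e => e ∈ R))).toFinset) ∧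
    (0 ≤ f (larScan' f c B a (l1.filter (fun e => e ∈ R))).toFinset ∧
      (larScan' f c B a (l1.filter (fun e => e ∈ R))).toFinset ⊆ V) ∧
    (cost c ((takeCost c B (larScan' f c B a (l1.filter (fun e => e ∈ R))).reverse).toFinset) ≤ B ∧
      (takeCost c B (larScan' f c B a (l1.filter (fun e => e ∈ R))).reverse).toFinset ⊆ V) ∧
    (a * f (larScan' f c B a (l1.filter (fun e => e ∈ R))).toFinset ≤
      (a + 2) * f ((takeCost c B (larScan' f c B a (l1.filter (fun e => e ∈ R))).reverse).toFinset)) := by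
  classical
  set L : List α := l1.filter (fun e => e ∈ R) with hLdef
  have hLnd : L.Nodup := hl1d.filter _
  have hLsub : ∀ x ∈ L, x ∈ l1 ∧ x ∈ R := by
    intro x hx
    rw [hLdef, List.mem_filter] at hx
    exact ⟨hx.1, by simpa using hx.2⟩
  have hLm : ∀ x ∈ L, x ∈ V ∧ 0 < c x := by
    intro x hx
    exact ⟨(hl1m x (hLsub x hx).1).1, (hl1m x (hLsub x hx).1).2.1⟩
  obtain ⟨⟨Q, hQ1, hQ2⟩, hmono, hC3, hC4, hC5⟩ :=
    scan_spec f c B a V hB ha hnn L [] (by simpa using hLnd) hLm (by simp)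
      (by simp [hnorm])
  have hSRdef : larScan' f c B a L = L.foldl (lstep f c B a) [] := rfl
  set S : List α := L.foldl (lstep f c B a) [] with hSdef
  have hSQ : S = Q := by simpa using hQ1
  have hSnd : S.Nodup := by rw [hSQ]; exact hQ2.nodup hLnd
  have hSL : ∀ x ∈ S, x ∈ L := by rw [hSQ]; exact fun x hx => hQ2.mem hx
  have hmem1 : ∀ x ∈ S.toFinset, x ∈ R ∧ x ∈ l1 := by
    intro x hx
    have := hLsub x (hSL x (List.mem_toFinset.mp hx))
    exact ⟨this.2, this.1⟩
  have hSfinL : S.toFinset ⊆ L.toFinset := by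
    intro x hx
    exact List.mem_toFinset.mpr (hSL x (List.mem_toFinset.mp hx))
  have hSV : S.toFinset ⊆ V := by
    intro x hx
    exact (hLm x (hSL x (List.mem_toFinset.mp hx))).1
  have hf0 : 0 ≤ f S.toFinset := by
    have := hmono
    simpa [hnorm] using this
  -- translation between relative scans and `Tl`
  have hTrel : ∀ e ∈ R, (L.takeWhile (fun y => y ≠ e)).foldl (lstep f c B a) [] =
      Tl f c B a l1 e R := by
    intro e heR
    rw [Tl, hLdef, filter_takeWhile_comm _ e (by simpa using heR) l1]
  -- accepted elements
  have hmem4 : ∀ e ∈ S.toFinset,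
      a * c e * f (Tl f c B a l1 e R).toFinset / B ≤ MT f c B a l1 e R := by
    intro e he
    have heL : e ∈ L := hSL e (List.mem_toFinset.mp he)
    have heR : e ∈ R := (hLsub e heL).2
    have hce : 0 < c e := (hLm e heL).2
    have h := (hC3 e heL he).1
    rw [hTrel e heR] at h
    have h2 := (le_div_iff₀ hce).mp h
    have : a * c e * f (Tl f c B a l1 e R).toFinset / B =
        a * f (Tl f c B a l1 e R).toFinset / B * c e := by ring
    rw [MT, this]
    exact h2
  -- rejected elements
  have hmem5 : ∀ e ∈ l1, e ∈ R → e ∉ S.toFinset →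
      MT f c B a l1 e R < a * c e * f (Tl f c B a l1 e R).toFinset / B := by
    intro e hel heR heS
    have heL : e ∈ L := by
      rw [hLdef, List.mem_filter]
      exact ⟨hel, by simpa using heR⟩
    have hce : 0 < c e := (hLm e heL).2
    have h := hC4 e heL heS
    rw [hTrel e heR] at h
    rw [not_le] at h
    have h2 := (div_lt_iff₀ hce).mp h
    have : a * c e * f (Tl f c B a l1 e R).toFinset / B =
        a * f (Tl f c B a l1 e R).toFinset / B * c e := by ring
    rw [MT, this]
    exact h2
  -- telescoping into a finset sum
  have hmem3 : f S.toFinset = ∑ e ∈ S.toFinset, MT f c B a l1 e R := by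
    have h5 := hC5
    have hcongr : (L.map (fun e => if e ∈ S.toFinset then
        marg f e ((L.takeWhile (fun y => y ≠ e)).foldl (lstep f c B a) []).toFinset else 0)) =
        (L.map (fun e => if e ∈ S.toFinset then MT f c B a l1 e R else 0)) := by
      apply List.map_congr_left
      intro e he
      by_cases heS : e ∈ S.toFinset
      · rw [if_pos heS, if_pos heS, MT, hTrel e (hLsub e he).2]
      · rw [if_neg heS, if_neg heS]
    rw [hcongr] at h5
    rw [listsum_to_finset _ L hLnd S.toFinset hSfinL] at h5
    simpa [hnorm] using h5
  -- prefix states are below the final state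
  have hmem6 : ∀ e ∈ l1, (Tl f c B a l1 e R).toFinset ⊆ S.toFinset ∧
      0 ≤ f (Tl f c B a l1 e R).toFinset ∧
      f (Tl f c B a l1 e R).toFinset ≤ f S.toFinset := by
    intro e hel
    set tw : List α := l1.takeWhile (fun y => y ≠ e) with htw
    set dw : List α := l1.dropWhile (fun y => y ≠ e) with hdw
    have htwdw : tw ++ dw = l1 := List.takeWhile_append_dropWhile
    have htwnd : (tw ++ dw).Nodup := by rw [htwdw]; exact hl1d
    have htwm : ∀ x ∈ tw, x ∈ l1 := by
      intro x hx; rw [← htwdw]; exact List.mem_append.mpr (Or.inl hx)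
    have hdwm : ∀ x ∈ dw, x ∈ l1 := by
      intro x hx; rw [← htwdw]; exact List.mem_append.mpr (Or.inr hx)
    have htwf_nd : (tw.filter (fun x => x ∈ R)).Nodup :=
      ((List.nodup_append.mp htwnd).1).filter _
    have hdwf_nd : (dw.filter (fun x => x ∈ R)).Nodup :=
      ((List.nodup_append.mp htwnd).2.1).filter _
    obtain ⟨⟨Q0, hQ01, hQ02⟩, hmono0, _, _, _⟩ :=
      scan_spec f c B a V hB ha hnn (tw.filter (fun x => x ∈ R)) [] (by simpa using htwf_nd)
        (fun x hx => by
          have hxtw : x ∈ tw := List.mem_of_mem_filter hx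
          exact ⟨(hl1m x (htwm x hxtw)).1, (hl1m x (htwm x hxtw)).2.1⟩)
        (by simp) (by simp [hnorm])
    have hTldef : Tl f c B a l1 e R = (tw.filter (fun x => x ∈ R)).foldl (lstep f c B a) [] := rfl
    have hTlnd : (Tl f c B a l1 e R).Nodup := by
      rw [hTldef, hQ01]
      simpa using hQ02.nodup htwf_nd
    have hTlsub : ∀ x ∈ Tl f c B a l1 e R, x ∈ tw.filter (fun x => x ∈ R) := by
      intro x hx
      rw [hTldef, hQ01] at hx
      simp only [List.nil_append] at hx
      exact hQ02.mem hx
    have hTlV : (Tl f c B a l1 e R).toFinset ⊆ V := by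
      intro x hx
      have := hTlsub x (List.mem_toFinset.mp hx)
      exact (hl1m x (htwm x (List.mem_of_mem_filter this))).1
    have hTl0 : 0 ≤ f (Tl f c B a l1 e R).toFinset := by
      rw [hTldef]
      have := hmono0
      simpa [hnorm] using this
    -- split the full scan at e's position
    have hLsplit : L = (tw.filter (fun x => x ∈ R)) ++ (dw.filter (fun x => x ∈ R)) := by
      rw [hLdef, ← List.filter_append, htwdw]
    have hfoldsplit : S = (dw.filter (fun x => x ∈ R)).foldl (lstep f c B a)
        (Tl f c B a l1 e R) := by
      rw [hSdef, hLsplit, List.foldl_append, hTldef]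
    have hdisj : ∀ x ∈ dw.filter (fun x => x ∈ R), x ∉ Tl f c B a l1 e R := by
      intro x hx hx2
      have hxdw : x ∈ dw := List.mem_of_mem_filter hx
      have hxtw : x ∈ tw := List.mem_of_mem_filter (hTlsub x hx2)
      have := List.nodup_append.mp htwnd
      exact this.2.2 x hxtw x hxdw rfl
    have hnd2 : (dw.filter (fun x => x ∈ R) ++ Tl f c B a l1 e R).Nodup := by
      rw [List.nodup_append]
      exact ⟨hdwf_nd, hTlnd, fun x hx y hy hxy => hdisj x hx (hxy ▸ hy)⟩
    obtain ⟨⟨Q1, hQ11, hQ12⟩, hmono1, _, _, _⟩ :=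
      scan_spec f c B a V hB ha hnn (dw.filter (fun x => x ∈ R)) (Tl f c B a l1 e R) hnd2
        (fun x hx => by
          have hxdw : x ∈ dw := List.mem_of_mem_filter hx
          exact ⟨(hl1m x (hdwm x hxdw)).1, (hl1m x (hdwm x hxdw)).2.1⟩)
        hTlV hTl0
    refine ⟨?_, hTl0, ?_⟩
    · intro x hx
      rw [hfoldsplit, hQ11]
      simp only [List.toFinset_append, Finset.mem_union]
      exact Or.inl hx
    · rw [hfoldsplit]
      exact hmono1
  -- takeCost facts
  obtain ⟨k, hk1, hk2, hk3, hk4⟩ := takeCost_spec c S.reverse B (le_of_lt hB)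
  have hrevnd : S.reverse.Nodup := by simpa using hSnd
  have htknd : (S.reverse.take k).Nodup := (List.take_sublist _ _).nodup hrevnd
  have htkV : (S.reverse.take k).toFinset ⊆ V := by
    intro x hx
    have : x ∈ S.reverse := (List.take_sublist _ _).mem (List.mem_toFinset.mp hx)
    exact hSV (List.mem_toFinset.mpr (List.mem_reverse.mp this))
  have hcost : cost c (takeCost c B S.reverse).toFinset ≤ B := by
    rw [hk2, cost, List.sum_toFinset _ htknd]
    exact hk3
  have hS'V : (takeCost c B S.reverse).toFinset ⊆ V := by rw [hk2]; exact htkV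
  have hsubtele : ∀ e1 ∈ L, f (Tl f c B a l1 e1 R).toFinset =
      ∑ x ∈ (Tl f c B a l1 e1 R).toFinset, MT f c B a l1 x R := by
    intro e1 he1L
    have he1R : e1 ∈ R := (hLsub e1 he1L).2
    set L1 : List α := L.takeWhile (fun y => y ≠ e1) with hL1def
    have hL1sub : L1.Sublist L := List.takeWhile_sublist _
    have hL1nd : L1.Nodup := hL1sub.nodup hLnd
    have hL1L : ∀ x ∈ L1, x ∈ L := fun x hx => hL1sub.mem hx
    obtain ⟨⟨Q2, hQ21, hQ22⟩, hmono2, _, _, hC52⟩ :=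
      scan_spec f c B a V hB ha hnn L1 [] (by simpa using hL1nd)
        (fun x hx => hLm x (hL1L x hx)) (by simp) (by simp [hnorm])
    have hTl1 : Tl f c B a l1 e1 R = L1.foldl (lstep f c B a) [] := (hTrel e1 he1R).symm
    have hTfin_sub : (Tl f c B a l1 e1 R).toFinset ⊆ L1.toFinset := by
      intro x hx
      rw [hTl1] at hx
      rw [hQ21] at hx
      simp only [List.nil_append] at hx
      exact List.mem_toFinset.mpr (hQ22.mem (List.mem_toFinset.mp hx))
    have hcongr : (L1.map (fun x => if x ∈ (L1.foldl (lstep f c B a) []).toFinset then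
        marg f x ((L1.takeWhile (fun y => y ≠ x)).foldl (lstep f c B a) []).toFinset else 0)) =
        (L1.map (fun x => if x ∈ (L1.foldl (lstep f c B a) []).toFinset then
          MT f c B a l1 x R else 0)) := by
      apply List.map_congr_left
      intro x hxL1
      by_cases hxT : x ∈ (L1.foldl (lstep f c B a) []).toFinset
      · rw [if_pos hxT, if_pos hxT, MT]
        have hxR : x ∈ R := (hLsub x (hL1L x hxL1)).2
        rw [hL1def, takeWhile_takeWhile_ne e1 x L hxL1, hTrel x hxR]
      · rw [if_neg hxT, if_neg hxT]
    rw [hTl1]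
    rw [hC52, hcongr, listsum_to_finset _ L1 hL1nd _ (by rw [← hTl1]; exact hTfin_sub)]
    simp [hnorm]
  have hmem8 : a * f S.toFinset ≤ (a + 2) * f (takeCost c B S.reverse).toFinset := by
    by_cases hcase : k = S.reverse.length
    · have : S.reverse.take k = S.reverse := by rw [hcase, List.take_length]
      rw [hk2, this, List.toFinset_reverse]
      nlinarith [hf0]
    · have hklt : k < S.reverse.length := lt_of_le_of_ne hk1 hcase
      have hBlt : B < ((S.reverse.take (k+1)).map c).sum := hk4.resolve_left hcase
      set e' : α := S.reverse[k]'hklt with he'def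
      have htake1 : S.reverse.take (k+1) = S.reverse.take k ++ [e'] := by
        rw [List.take_succ, List.getElem?_eq_getElem hklt]
        rfl
      have he'S : e' ∈ S := List.mem_reverse.mp (List.getElem_mem hklt)
      have he'l1 : e' ∈ l1 := (hLsub e' (hSL e' he'S)).1
      have hce' : c e' ≤ B / 2 := (hl1m e' he'l1).2.2
      have hsumlt : B < ((S.reverse.take k).map c).sum + c e' := by
        rw [htake1, List.map_append, List.sum_append] at hBlt
        simpa using hBlt
      set W : List α := (S.reverse.take k).reverse with hWdef
      set Qp : List α := (S.reverse.drop k).reverse with hQpdef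
      have hSQW : S = Qp ++ W := by
        rw [hQpdef, hWdef, ← List.reverse_append, List.take_append_drop, List.reverse_reverse]
      have hQpWnd : (Qp ++ W).Nodup := by rw [← hSQW]; exact hSnd
      have hndQp : Qp.Nodup := (List.nodup_append.mp hQpWnd).1
      have hndW : W.Nodup := (List.nodup_append.mp hQpWnd).2.1
      have hdisjQW : ∀ y ∈ Qp, y ∉ W := fun y hy hz => (List.nodup_append.mp hQpWnd).2.2 y hy y hz rfl
      have hWfin : W.toFinset = (S.reverse.take k).toFinset := by
        rw [hWdef, List.toFinset_reverse]
      have hS'W : (takeCost c B S.reverse).toFinset = W.toFinset := by rw [hk2, hWfin]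
      have hWS : ∀ x ∈ W, x ∈ S := by
        intro x hx; rw [hSQW]; exact List.mem_append.mpr (Or.inr hx)
      have hQpS : ∀ x ∈ Qp, x ∈ S := by
        intro x hx; rw [hSQW]; exact List.mem_append.mpr (Or.inl hx)
      have hWne : W ≠ [] := by
        intro h
        have h2 : S.reverse.take k = [] := by
          rw [hWdef] at h
          simpa using congrArg List.reverse h
        rw [h2] at hsumlt
        simp at hsumlt
        linarith
      set e₀ : α := W.head hWne with he₀def
      have he₀W : e₀ ∈ W := List.head_mem hWne
      have hW0 : W = e₀ :: W.tail := (List.cons_head_tail hWne).symm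
      have he₀S : e₀ ∈ S.toFinset := List.mem_toFinset.mpr (hWS e₀ he₀W)
      have he₀L : e₀ ∈ L := hSL e₀ (hWS e₀ he₀W)
      have he₀R : e₀ ∈ R := (hLsub e₀ he₀L).2
      -- T at e₀ is exactly Qp
      have hTQp : Tl f c B a l1 e₀ R = Qp := by
        have h := (hC3 e₀ he₀L he₀S).2
        rw [hTrel e₀ he₀R] at h
        rw [h]
        have he₀Qp : e₀ ∉ Qp := fun hq => hdisjQW e₀ hq he₀W
        calc S.takeWhile (fun y => y ≠ e₀) = (Qp ++ e₀ :: W.tail).takeWhile (fun y => y ≠ e₀) := by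
              rw [← hW0, ← hSQW]
          _ = Qp := takeWhile_ne_middle e₀ Qp W.tail he₀Qp
      have hfQsum : f Qp.toFinset = ∑ x ∈ Qp.toFinset, MT f c B a l1 x R := by
        have := hsubtele e₀ he₀L
        rw [hTQp] at this
        exact this
      have hQpV : Qp.toFinset ⊆ V := by
        intro x hx
        exact hSV (List.mem_toFinset.mpr (hQpS x (List.mem_toFinset.mp hx)))
      have hfQ0 : 0 ≤ f Qp.toFinset := hnn _ hQpV
      -- each element of W sees at least f(Qp) at its arrival
      have hMTnn : ∀ x ∈ S.toFinset, 0 ≤ MT f c B a l1 x R := by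
        intro x hx
        have h4 := hmem4 x hx
        have hxL : x ∈ L := hSL x (List.mem_toFinset.mp hx)
        have hcx : 0 < c x := (hLm x hxL).2
        have hT0 : 0 ≤ f (Tl f c B a l1 x R).toFinset := (hmem6 x (hLsub x hxL).1).2.1
        have : 0 ≤ a * c x * f (Tl f c B a l1 x R).toFinset / B := by positivity
        linarith
      have hfTge : ∀ e ∈ W, f Qp.toFinset ≤ f (Tl f c B a l1 e R).toFinset := by
        intro e heW
        have heS : e ∈ S.toFinset := List.mem_toFinset.mpr (hWS e heW)
        have heL : e ∈ L := hSL e (hWS e heW)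
        have heR : e ∈ R := (hLsub e heL).2
        have heQp : e ∉ Qp := fun hq => hdisjQW e hq heW
        have hTe : Tl f c B a l1 e R = Qp ++ W.takeWhile (fun y => y ≠ e) := by
          have h := (hC3 e heL heS).2
          rw [hTrel e heR] at h
          rw [h, hSQW]
          exact takeWhile_all_append _ Qp W (fun y hy => by
            simp only [decide_eq_true_eq]
            intro hye
            exact hdisjQW y hy (hye ▸ heW))
        have hTfin : (Tl f c B a l1 e R).toFinset =
            Qp.toFinset ∪ (W.takeWhile (fun y => y ≠ e)).toFinset := by
          rw [hTe, List.toFinset_append]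
        have hdisj2 : Disjoint Qp.toFinset (W.takeWhile (fun y => y ≠ e)).toFinset := by
          rw [Finset.disjoint_left]
          intro x hx hx2
          exact hdisjQW x (List.mem_toFinset.mp hx)
            ((List.takeWhile_sublist _).mem (List.mem_toFinset.mp hx2))
        have htele := hsubtele e heL
        rw [hTfin] at htele ⊢
        rw [Finset.sum_union hdisj2] at htele
        rw [← hfQsum] at htele
        have hpos : 0 ≤ ∑ x ∈ (W.takeWhile (fun y => y ≠ e)).toFinset, MT f c B a l1 x R := by
          apply Finset.sum_nonneg
          intro x hx
          apply hMTnn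
          exact List.mem_toFinset.mpr
            (hWS x ((List.takeWhile_sublist _).mem (List.mem_toFinset.mp hx)))
        linarith
      -- the split of the total telescope
      have hfinsplit : S.toFinset = Qp.toFinset ∪ W.toFinset := by
        rw [hSQW, List.toFinset_append]
      have hdisjfin : Disjoint Qp.toFinset W.toFinset := by
        rw [Finset.disjoint_left]
        intro x hx hx2
        exact hdisjQW x (List.mem_toFinset.mp hx) (List.mem_toFinset.mp hx2)
      have hsumW : ∑ x ∈ W.toFinset, MT f c B a l1 x R = f S.toFinset - f Qp.toFinset := by
        have hsplit_sum : ∑ x ∈ S.toFinset, MT f c B a l1 x R =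
            ∑ x ∈ Qp.toFinset, MT f c B a l1 x R + ∑ x ∈ W.toFinset, MT f c B a l1 x R := by
          rw [hfinsplit, Finset.sum_union hdisjfin]
        linarith [hmem3, hfQsum, hsplit_sum]
      -- lower bound on the W-sum
      have hcostW : B / 2 ≤ cost c W.toFinset := by
        have : cost c W.toFinset = ((S.reverse.take k).map c).sum := by
          rw [hWfin, cost, List.sum_toFinset _ htknd]
        rw [this]
        linarith
      have hlow : (a * f Qp.toFinset / B) * cost c W.toFinset ≤
          ∑ x ∈ W.toFinset, MT f c B a l1 x R := by
        rw [cost, Finset.mul_sum]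
        apply Finset.sum_le_sum
        intro x hx
        have hxW : x ∈ W := List.mem_toFinset.mp hx
        have hxS : x ∈ S.toFinset := List.mem_toFinset.mpr (hWS x hxW)
        have hxL : x ∈ L := hSL x (hWS x hxW)
        have hcx : 0 < c x := (hLm x hxL).2
        have h4 := hmem4 x hxS
        have h6 := hfTge x hxW
        have hax : (0:ℝ) ≤ a * c x := by nlinarith [ha, hcx]
        have : a * f Qp.toFinset / B * c x ≤ a * c x * f (Tl f c B a l1 x R).toFinset / B := by
          have heq : a * f Qp.toFinset / B * c x = a * c x * f Qp.toFinset * B⁻¹ := by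
            field_simp
          rw [heq, div_eq_mul_inv]
          exact mul_le_mul_of_nonneg_right (mul_le_mul_of_nonneg_left h6 hax)
            (inv_nonneg.mpr hB.le)
        linarith
      have hlow2 : a * f Qp.toFinset / 2 ≤ ∑ x ∈ W.toFinset, MT f c B a l1 x R := by
        have hcoef : 0 ≤ a * f Qp.toFinset / B := by positivity
        have := mul_le_mul_of_nonneg_left hcostW hcoef
        calc a * f Qp.toFinset / 2 = (a * f Qp.toFinset / B) * (B / 2) := by
              field_simp
          _ ≤ (a * f Qp.toFinset / B) * cost c W.toFinset := this
          _ ≤ _ := hlow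
      -- f(W) dominates the W-sum
      have hWV : W.toFinset ⊆ V := by
        intro x hx
        exact hSV (List.mem_toFinset.mpr (hWS x (List.mem_toFinset.mp hx)))
      have hWbound : ∑ x ∈ W.toFinset, MT f c B a l1 x R ≤ f W.toFinset := by
        have htl := tele f W ∅ hndW (by simp)
        simp only [Finset.empty_union, hnorm, zero_add] at htl
        have hlist : (W.map (fun e => marg f e ((W.takeWhile (fun y => y ≠ e)).toFinset))).sum =
            ∑ x ∈ W.toFinset, marg f x ((W.takeWhile (fun y => y ≠ x)).toFinset) :=
          (List.sum_toFinset _ hndW).symm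
        rw [htl, hlist]
        apply Finset.sum_le_sum
        intro x hx
        have hxW : x ∈ W := List.mem_toFinset.mp hx
        have hxS : x ∈ S.toFinset := List.mem_toFinset.mpr (hWS x hxW)
        have hxL : x ∈ L := hSL x (hWS x hxW)
        have hxR : x ∈ R := (hLsub x hxL).2
        have hxV : x ∈ V := (hLm x hxL).1
        have hxQp : x ∉ Qp := fun hq => hdisjQW x hq hxW
        have hTx : Tl f c B a l1 x R = Qp ++ W.takeWhile (fun y => y ≠ x) := by
          have h := (hC3 x hxL hxS).2
          rw [hTrel x hxR] at h
          rw [h, hSQW]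
          exact takeWhile_all_append _ Qp W (fun y hy => by
            simp only [decide_eq_true_eq]
            intro hyx
            exact hdisjQW y hy (hyx ▸ hxW))
        have hsubset : (W.takeWhile (fun y => y ≠ x)).toFinset ⊆ (Tl f c B a l1 x R).toFinset := by
          rw [hTx, List.toFinset_append]
          exact Finset.subset_union_right
        have hxnotT : x ∉ (Tl f c B a l1 x R).toFinset := by
          rw [hTx, List.toFinset_append, Finset.mem_union]
          rintro (h | h)
          · exact hxQp (List.mem_toFinset.mp h)
          · exact not_mem_takeWhile_ne x W (List.mem_toFinset.mp h)
        have hTV : (Tl f c B a l1 x R).toFinset ⊆ V := by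
          rw [hTx, List.toFinset_append]
          apply Finset.union_subset hQpV
          intro y hy
          exact hWV (List.mem_toFinset.mpr
            ((List.takeWhile_sublist _).mem (List.mem_toFinset.mp hy)))
        have := hsub ((W.takeWhile (fun y => y ≠ x)).toFinset) ((Tl f c B a l1 x R).toFinset)
          hsubset hTV x hxV hxnotT
        rw [MT, marg, marg]
        linarith
      -- combine
      rw [hS'W]
      have hfS : f S.toFinset = f Qp.toFinset + ∑ x ∈ W.toFinset, MT f c B a l1 x R := by
        linarith [hsumW]
      nlinarith [hlow2, hWbound, hsumW, hfQ0, ha.le]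
  exact ⟨hmem1, hmem3, hmem4, hmem5, hmem6, ⟨hf0, hSV⟩, ⟨hcost, hS'V⟩, hmem8⟩

end LAR


lemma larScan_eq {α : Type*} [DecidableEq α] (f : Finset α → ℝ) (c : α → ℝ) (B a : ℝ)
    (L : List α) : larScan f c B a L = larScan' f c B a L := rfl


/-- With parameters `p = √2 − 1` and `α = √(2 + 2√2)`, the random output
`S` of algorithm `LAR` is always feasible (`c(S) ≤ B`) and satisfies
`opt ≤ 16.034 · E[f(S)]`, the expectation being over the random sample `V_p ⊆ V1` that
includes each element of `V1` independently with probability `p`. -/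
theorem lar_approx {α : Type*} [DecidableEq α]
    (V : Finset α) (f : Finset α → ℝ) (c : α → ℝ) (B : ℝ) (hB : 0 < B)
    (hnonneg : ∀ S, S ⊆ V → 0 ≤ f S) (hnorm : f ∅ = 0)
    (hsub : ∀ A B' : Finset α, A ⊆ B' → B' ⊆ V → ∀ e ∈ V, e ∉ B' →
      f (insert e B') - f B' ≤ f (insert e A) - f A)
    (hc : ∀ e ∈ V, 0 < c e ∧ c e ≤ B)
    -- the fixed scanning order of `V1 = {e ∈ V : c(e) ≤ B/2}`
    (l1 : List α) (hl1d : l1.Nodup)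
    (hl1V : l1.toFinset = V.filter (fun e => c e ≤ B / 2))
    -- the maximal singleton `e_max = argmax_{e ∈ V} f({e})`
    (emax : α) (hemaxV : emax ∈ V) (hemax : ∀ e ∈ V, f {e} ≤ f {emax})
    -- the parameters of the algorithm
    (p a : ℝ) (hp : p = Real.sqrt 2 - 1) (ha : a = Real.sqrt (2 + 2 * Real.sqrt 2))
    -- an optimal solution
    (O : Finset α) (hO : O ⊆ V) (hOc : cost c O ≤ B)
    (hOopt : ∀ T, T ⊆ V → cost c T ≤ B → f T ≤ f O) :
    (∀ R ∈ (V.filter (fun e => c e ≤ B / 2)).powerset,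
        cost c (larOut f c B a l1 R emax) ≤ B) ∧
      f O ≤ 16.034 * ∑ R ∈ (V.filter (fun e => c e ≤ B / 2)).powerset,
        p ^ R.card * (1 - p) ^ ((V.filter (fun e => c e ≤ B / 2)).card - R.card) *
          f (larOut f c B a l1 R emax) := by
  classical
  have hs2 : Real.sqrt 2 ^ 2 = 2 := Real.sq_sqrt (by norm_num)
  have hs0 : (0:ℝ) ≤ Real.sqrt 2 := Real.sqrt_nonneg 2
  set s : ℝ := Real.sqrt 2 with hsdef
  have hslb : 1.414213 ≤ s := by nlinarith
  have hsub' : s ≤ 1.414214 := by nlinarith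
  have hp0 : 0 < p := by rw [hp]; nlinarith
  have hp1 : p < 1 := by rw [hp]; nlinarith
  have ha2 : a ^ 2 = 2 + 2 * s := by rw [ha]; exact Real.sq_sqrt (by nlinarith)
  have ha0 : 0 < a := by rw [ha]; exact Real.sqrt_pos.mpr (by nlinarith)
  have halb : 2.19736 ≤ a := by nlinarith
  have haub : a ≤ 2.19738 := by nlinarith
  have hps : p = s - 1 := hp
  set V1 : Finset α := V.filter (fun e => c e ≤ B / 2) with hV1def
  have hl1m : ∀ x ∈ l1, x ∈ V ∧ 0 < c x ∧ c x ≤ B / 2 := by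
    intro x hx
    have hxV1 : x ∈ V1 := by rw [← hl1V]; exact List.mem_toFinset.mpr hx
    rw [hV1def, Finset.mem_filter] at hxV1
    exact ⟨hxV1.1, (hc x hxV1.1).1, hxV1.2⟩
  have hV1V : V1 ⊆ V := Finset.filter_subset _ _
  have run := fun R => LAR.run_facts f c B a V hB ha0 hnonneg hnorm hsub l1 hl1d hl1m R
  have hw0 : ∀ R : Finset α, (0:ℝ) ≤ p ^ R.card * (1 - p) ^ (V1.card - R.card) := by
    intro R
    exact mul_nonneg (pow_nonneg hp0.le _) (pow_nonneg (by linarith) _)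
  have hw1 : ∑ R ∈ V1.powerset, p ^ R.card * (1 - p) ^ (V1.card - R.card) = 1 := by
    rw [LAR.sum_w p (1-p) V1]
    norm_num
  have hSPrV : ∀ R : Finset α,
      (takeCost c B (larScan' f c B a (l1.filter (fun e => e ∈ R))).reverse).toFinset ⊆ V :=
    fun R => ((run R).2.2.2.2.2.2.1).2
  have hout : ∀ R : Finset α,
      f {emax} ≤ f (larOut f c B a l1 R emax) ∧
      f ((takeCost c B (larScan' f c B a (l1.filter (fun e => e ∈ R))).reverse).toFinset) ≤
        f (larOut f c B a l1 R emax) ∧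
      larOut f c B a l1 R emax ⊆ V := by
    intro R
    rw [larOut, larScan_eq]
    by_cases h : f ((takeCost c B (larScan' f c B a
        (l1.filter (fun e => e ∈ R))).reverse).toFinset) ≤ f {emax}
    · rw [if_pos h]
      exact ⟨le_refl _, h, Finset.singleton_subset_iff.mpr hemaxV⟩
    · rw [if_neg h]
      exact ⟨(not_le.mp h).le, le_refl _, hSPrV R⟩
  have hfeas : ∀ R ∈ V1.powerset, cost c (larOut f c B a l1 R emax) ≤ B := by
    intro R _
    rw [larOut, larScan_eq]
    by_cases h : f ((takeCost c B (larScan' f c B a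
        (l1.filter (fun e => e ∈ R))).reverse).toFinset) ≤ f {emax}
    · rw [if_pos h, cost, Finset.sum_singleton]
      exact (hc emax hemaxV).2
    · rw [if_neg h]
      exact ((run R).2.2.2.2.2.2.1).1
  set F : ℝ := ∑ R ∈ V1.powerset, p ^ R.card * (1 - p) ^ (V1.card - R.card) *
    f (larOut f c B a l1 R emax) with hFdef
  have hF0 : 0 ≤ F := by
    apply Finset.sum_nonneg
    intro R _
    exact mul_nonneg (hw0 R) (hnonneg _ (hout R).2.2)
  have hFemax : f {emax} ≤ F := by
    have h1 : ∑ R ∈ V1.powerset, p ^ R.card * (1 - p) ^ (V1.card - R.card) * f {emax} ≤ F := by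
      apply Finset.sum_le_sum
      intro R _
      exact mul_le_mul_of_nonneg_left (hout R).1 (hw0 R)
    rw [← Finset.sum_mul, hw1, one_mul] at h1
    exact h1
  -- independence of the pre-state from e's own membership
  have hTind : ∀ (e : α) (R : Finset α),
      LAR.Tl f c B a l1 e R = LAR.Tl f c B a l1 e (R.erase e) := by
    intro e R
    rw [LAR.Tl, LAR.Tl]
    congr 1
    apply List.filter_congr
    intro x hx
    have hxne : x ≠ e := by simpa using List.mem_takeWhile_imp hx
    simp [Finset.mem_erase, hxne]
  -- the key estimate
  have hkey : ∀ O1 : Finset α, O1 ⊆ V1 →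
      a * (p * (1-p) * f O1) ≤ (1 + p * a * (cost c O1 / B)) * ((a+2) * F) := by
    intro O1 hO1V1
    have hO1V : O1 ⊆ V := hO1V1.trans hV1V
    have hO1l1 : ∀ e ∈ O1, e ∈ l1 := by
      intro e he
      exact List.mem_toFinset.mp (by rw [hl1V]; exact hO1V1 he)
    have hO1c : ∀ e ∈ O1, 0 < c e := fun e he => (hc e (hO1V he)).1
    set Y : ℝ := ∑ R ∈ V1.powerset, p ^ R.card * (1 - p) ^ (V1.card - R.card) *
      f (larScan' f c B a (l1.filter (fun e => e ∈ R))).toFinset with hYdef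
    have hY0 : 0 ≤ Y := by
      apply Finset.sum_nonneg
      intro R _
      exact mul_nonneg (hw0 R) ((run R).2.2.2.2.2.1).1
    -- BFNS lower bound
    have hgsub : ∀ A B2 : Finset α, A ⊆ B2 → B2 ⊆ V1 → ∀ e ∈ V1, e ∉ B2 →
        f (O1 ∪ insert e B2) - f (O1 ∪ B2) ≤ f (O1 ∪ insert e A) - f (O1 ∪ A) := by
      intro A B2 hAB hB2V1 e heV1 heB2
      by_cases heO1 : e ∈ O1
      · have h1 : O1 ∪ insert e B2 = O1 ∪ B2 := by
          rw [Finset.union_insert, Finset.insert_eq_self.mpr (Finset.mem_union_left _ heO1)]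
        have h2 : O1 ∪ insert e A = O1 ∪ A := by
          rw [Finset.union_insert, Finset.insert_eq_self.mpr (Finset.mem_union_left _ heO1)]
        rw [h1, h2]
        simp
      · rw [Finset.union_insert, Finset.union_insert]
        apply hsub (O1 ∪ A) (O1 ∪ B2) (Finset.union_subset_union_right hAB)
          (Finset.union_subset hO1V (hB2V1.trans hV1V)) e (hV1V heV1)
        simp only [Finset.mem_union]
        rintro (h | h)
        · exact heO1 h
        · exact heB2 h
    have hx1 : ∀ e ∈ V1, ∑ R ∈ V1.powerset, p ^ R.card * (1 - p) ^ (V1.card - R.card) *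
        (if e ∈ (larScan' f c B a (l1.filter (fun e => e ∈ R))).toFinset then (1:ℝ) else 0)
          ≤ p := by
      intro e heV1
      have hstep : ∀ R ∈ V1.powerset,
          p ^ R.card * (1 - p) ^ (V1.card - R.card) *
            (if e ∈ (larScan' f c B a (l1.filter (fun e => e ∈ R))).toFinset
              then (1:ℝ) else 0) ≤
          p ^ R.card * (1 - p) ^ (V1.card - R.card) * (if e ∈ R then (1:ℝ) else 0) := by
        intro R _
        apply mul_le_mul_of_nonneg_left _ (hw0 R)
        by_cases h : e ∈ (larScan' f c B a (l1.filter (fun e => e ∈ R))).toFinset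
        · rw [if_pos h, if_pos ((run R).1 e h).1]
        · rw [if_neg h]
          by_cases h2 : e ∈ R <;> simp [h2]
      calc ∑ R ∈ V1.powerset, p ^ R.card * (1 - p) ^ (V1.card - R.card) *
            (if e ∈ (larScan' f c B a (l1.filter (fun e => e ∈ R))).toFinset
              then (1:ℝ) else 0)
          ≤ ∑ R ∈ V1.powerset, p ^ R.card * (1 - p) ^ (V1.card - R.card) *
            (if e ∈ R then (1:ℝ) else 0) := Finset.sum_le_sum hstep
        _ = p * ∑ R ∈ V1.powerset, p ^ R.card * (1 - p) ^ (V1.card - R.card) * (1:ℝ) :=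
            LAR.sum_w_ite p V1 e heV1 (fun _ => (1:ℝ)) (fun _ => rfl)
        _ = p := by
            simp only [mul_one]
            rw [hw1, mul_one]
    have hbfns : (1-p) * f O1 ≤ ∑ R ∈ V1.powerset,
        p ^ R.card * (1 - p) ^ (V1.card - R.card) *
          f (O1 ∪ (larScan' f c B a (l1.filter (fun e => e ∈ R))).toFinset) := by
      have hbf := LAR.bfns (fun X => f (O1 ∪ X)) V1 hgsub
        (fun X hX => hnonneg _ (Finset.union_subset hO1V (hX.trans hV1V)))
        V1.powerset (fun R => p ^ R.card * (1 - p) ^ (V1.card - R.card))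
        (fun R _ => hw0 R) hw1
        (fun R => (larScan' f c B a (l1.filter (fun e => e ∈ R))).toFinset)
        (fun R _ x hx => by rw [← hl1V]; exact List.mem_toFinset.mpr ((run R).1 x hx).2)
        l1 hl1d hl1V p hp0.le hx1
      simpa only [Finset.union_empty] using hbf
    -- per-element expectation identities
    have hGsum : ∀ e ∈ O1, ∑ R ∈ V1.powerset, p ^ R.card * (1 - p) ^ (V1.card - R.card) *
        (if e ∈ R then a * c e * f (LAR.Tl f c B a l1 e R).toFinset / B else 0) =
        p * ∑ R ∈ V1.powerset, p ^ R.card * (1 - p) ^ (V1.card - R.card) *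
          (a * c e * f (LAR.Tl f c B a l1 e R).toFinset / B) := by
      intro e he
      exact LAR.sum_w_ite p V1 e (hO1V1 he) _ (fun R => by rw [← hTind])
    have hMsum : ∀ e ∈ O1, ∑ R ∈ V1.powerset, p ^ R.card * (1 - p) ^ (V1.card - R.card) *
        (if e ∈ R then LAR.MT f c B a l1 e R else 0) =
        p * ∑ R ∈ V1.powerset, p ^ R.card * (1 - p) ^ (V1.card - R.card) *
          LAR.MT f c B a l1 e R := by
      intro e he
      exact LAR.sum_w_ite p V1 e (hO1V1 he) _ (fun R => by rw [LAR.MT, LAR.MT, ← hTind])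
    have hMsplit : ∀ e : α, ∑ R ∈ V1.powerset, p ^ R.card * (1 - p) ^ (V1.card - R.card) *
        LAR.MT f c B a l1 e R =
        (∑ R ∈ V1.powerset, p ^ R.card * (1 - p) ^ (V1.card - R.card) *
          (if e ∈ R then LAR.MT f c B a l1 e R else 0)) +
        (∑ R ∈ V1.powerset, p ^ R.card * (1 - p) ^ (V1.card - R.card) *
          (if e ∈ R then 0 else LAR.MT f c B a l1 e R)) := by
      intro e
      rw [← Finset.sum_add_distrib]
      apply Finset.sum_congr rfl
      intro R _
      by_cases h : e ∈ R <;> simp [h]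
    set XX : ℝ := ∑ e ∈ O1, ∑ R ∈ V1.powerset,
      p ^ R.card * (1 - p) ^ (V1.card - R.card) *
        (if e ∈ R then a * c e * f (LAR.Tl f c B a l1 e R).toFinset / B else 0) with hXXdef
    set ZZ : ℝ := ∑ e ∈ O1, ∑ R ∈ V1.powerset,
      p ^ R.card * (1 - p) ^ (V1.card - R.card) *
        (if e ∈ R then LAR.MT f c B a l1 e R else 0) with hZZdef
    set NN : ℝ := ∑ e ∈ O1, ∑ R ∈ V1.powerset,
      p ^ R.card * (1 - p) ^ (V1.card - R.card) *
        (if e ∈ R then 0 else LAR.MT f c B a l1 e R) with hNNdef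
    have hpn : p * NN = (1-p) * ZZ := by
      rw [hNNdef, hZZdef, Finset.mul_sum, Finset.mul_sum]
      apply Finset.sum_congr rfl
      intro e he
      have h1 := hMsum e he
      have h2 := hMsplit e
      have h3 : p * (∑ R ∈ V1.powerset, p ^ R.card * (1 - p) ^ (V1.card - R.card) *
          LAR.MT f c B a l1 e R) =
          p * (∑ R ∈ V1.powerset, p ^ R.card * (1 - p) ^ (V1.card - R.card) *
            (if e ∈ R then LAR.MT f c B a l1 e R else 0)) +
          p * (∑ R ∈ V1.powerset, p ^ R.card * (1 - p) ^ (V1.card - R.card) *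
            (if e ∈ R then 0 else LAR.MT f c B a l1 e R)) := by
        rw [h2]; ring
      linarith
    -- pointwise E4
    have hpoint : ∀ R ∈ V1.powerset,
        f (O1 ∪ (larScan' f c B a (l1.filter (fun e => e ∈ R))).toFinset) ≤
        f (larScan' f c B a (l1.filter (fun e => e ∈ R))).toFinset + ∑ e ∈ O1,
          ((if e ∈ R then a * c e * f (LAR.Tl f c B a l1 e R).toFinset / B else 0) +
           (if e ∈ R then 0 else LAR.MT f c B a l1 e R)) := by
      intro R _
      obtain ⟨hr1, hr2, hr3, hr4, hr5, hr6, hr7, hr8⟩ := run R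
      have hexp := LAR.submod_expand f V hsub O1 hO1V
        (larScan' f c B a (l1.filter (fun e => e ∈ R))).toFinset hr6.2
      have hsd : ∑ e ∈ O1 \ (larScan' f c B a (l1.filter (fun e => e ∈ R))).toFinset,
          marg f e (larScan' f c B a (l1.filter (fun e => e ∈ R))).toFinset =
          ∑ e ∈ O1, (if e ∉ (larScan' f c B a (l1.filter (fun e => e ∈ R))).toFinset then
            marg f e (larScan' f c B a (l1.filter (fun e => e ∈ R))).toFinset else 0) := by
        rw [Finset.sdiff_eq_filter, Finset.sum_filter]
      have hO1u : f (O1 ∪ (larScan' f c B a (l1.filter (fun e => e ∈ R))).toFinset) ≤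
          f (larScan' f c B a (l1.filter (fun e => e ∈ R))).toFinset +
          ∑ e ∈ O1, (if e ∉ (larScan' f c B a (l1.filter (fun e => e ∈ R))).toFinset then
            marg f e (larScan' f c B a (l1.filter (fun e => e ∈ R))).toFinset else 0) := by
        rw [← hsd]; exact hexp
      have hbnd : ∑ e ∈ O1, (if e ∉ (larScan' f c B a (l1.filter (fun e => e ∈ R))).toFinset then
            marg f e (larScan' f c B a (l1.filter (fun e => e ∈ R))).toFinset else 0) ≤
          ∑ e ∈ O1,
          ((if e ∈ R then a * c e * f (LAR.Tl f c B a l1 e R).toFinset / B else 0) +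
           (if e ∈ R then 0 else LAR.MT f c B a l1 e R)) := by
        apply Finset.sum_le_sum
        intro e he
        have hel1 : e ∈ l1 := hO1l1 e he
        have hce : 0 < c e := hO1c e he
        have hT0 : 0 ≤ f (LAR.Tl f c B a l1 e R).toFinset := (hr5 e hel1).2.1
        by_cases heS : e ∈ (larScan' f c B a (l1.filter (fun e => e ∈ R))).toFinset
        · rw [if_neg (by simpa using heS)]
          have heR : e ∈ R := (hr1 e heS).1
          rw [if_pos heR, if_pos heR]
          have : 0 ≤ a * c e * f (LAR.Tl f c B a l1 e R).toFinset / B := by positivity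
          linarith
        · rw [if_pos heS]
          have hmle : marg f e (larScan' f c B a (l1.filter (fun e => e ∈ R))).toFinset ≤
              LAR.MT f c B a l1 e R := by
            rw [LAR.MT, marg, marg]
            exact hsub (LAR.Tl f c B a l1 e R).toFinset _ (hr5 e hel1).1 hr6.2
              e (hO1V he) heS
          by_cases heR : e ∈ R
          · rw [if_pos heR, if_pos heR]
            have := hr4 e hel1 heR heS
            linarith
          · rw [if_neg heR, if_neg heR]
            linarith
      linarith
    -- sum up E4
    have hE4 : (∑ R ∈ V1.powerset, p ^ R.card * (1 - p) ^ (V1.card - R.card) *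
        f (O1 ∪ (larScan' f c B a (l1.filter (fun e => e ∈ R))).toFinset)) ≤
        Y + (XX + NN) := by
      have h1 : (∑ R ∈ V1.powerset, p ^ R.card * (1 - p) ^ (V1.card - R.card) *
          f (O1 ∪ (larScan' f c B a (l1.filter (fun e => e ∈ R))).toFinset)) ≤
          ∑ R ∈ V1.powerset, p ^ R.card * (1 - p) ^ (V1.card - R.card) *
          (f (larScan' f c B a (l1.filter (fun e => e ∈ R))).toFinset + ∑ e ∈ O1,
          ((if e ∈ R then a * c e * f (LAR.Tl f c B a l1 e R).toFinset / B else 0) +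
           (if e ∈ R then 0 else LAR.MT f c B a l1 e R))) := by
        apply Finset.sum_le_sum
        intro R hR
        exact mul_le_mul_of_nonneg_left (hpoint R hR) (hw0 R)
      have h2 : ∑ R ∈ V1.powerset, p ^ R.card * (1 - p) ^ (V1.card - R.card) *
          (f (larScan' f c B a (l1.filter (fun e => e ∈ R))).toFinset + ∑ e ∈ O1,
          ((if e ∈ R then a * c e * f (LAR.Tl f c B a l1 e R).toFinset / B else 0) +
           (if e ∈ R then 0 else LAR.MT f c B a l1 e R))) = Y + (XX + NN) := by
        rw [hYdef, hXXdef, hNNdef]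
        rw [Finset.sum_comm (s := O1), Finset.sum_comm (s := O1), ← Finset.sum_add_distrib,
          ← Finset.sum_add_distrib]
        apply Finset.sum_congr rfl
        intro R _
        rw [mul_add, Finset.mul_sum, ← Finset.sum_add_distrib]
        congr 1
        apply Finset.sum_congr rfl
        intro e _
        ring
      linarith
    -- E7
    have hE7 : ZZ ≤ Y + XX := by
      rw [hZZdef, hYdef, hXXdef, Finset.sum_comm (s := O1), Finset.sum_comm (s := O1),
        ← Finset.sum_add_distrib]
      apply Finset.sum_le_sum
      intro R hR
      obtain ⟨hr1, hr2, hr3, hr4, hr5, hr6, hr7, hr8⟩ := run R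
      have hMTnn : ∀ x ∈ (larScan' f c B a (l1.filter (fun e => e ∈ R))).toFinset,
          0 ≤ LAR.MT f c B a l1 x R := by
        intro x hx
        have h3 := hr3 x hx
        have hcx : 0 < c x := (hl1m x (hr1 x hx).2).2.1
        have hT0 : 0 ≤ f (LAR.Tl f c B a l1 x R).toFinset := (hr5 x (hr1 x hx).2).2.1
        have : 0 ≤ a * c x * f (LAR.Tl f c B a l1 x R).toFinset / B := by positivity
        linarith
      have hinner : ∑ e ∈ O1, (if e ∈ R then LAR.MT f c B a l1 e R else 0) ≤
          f (larScan' f c B a (l1.filter (fun e => e ∈ R))).toFinset +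
          ∑ e ∈ O1, (if e ∈ R then a * c e * f (LAR.Tl f c B a l1 e R).toFinset / B else 0) := by
        have hstep : ∑ e ∈ O1, (if e ∈ R then LAR.MT f c B a l1 e R else 0) ≤
            ∑ e ∈ O1, ((if e ∈ (larScan' f c B a (l1.filter (fun e => e ∈ R))).toFinset then
              LAR.MT f c B a l1 e R else 0) +
             (if e ∈ R then a * c e * f (LAR.Tl f c B a l1 e R).toFinset / B else 0)) := by
          apply Finset.sum_le_sum
          intro e he
          have hel1 : e ∈ l1 := hO1l1 e he
          have hce : 0 < c e := hO1c e he
          have hT0 : 0 ≤ f (LAR.Tl f c B a l1 e R).toFinset := (hr5 e hel1).2.1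
          have hG0 : 0 ≤ a * c e * f (LAR.Tl f c B a l1 e R).toFinset / B := by positivity
          by_cases heS : e ∈ (larScan' f c B a (l1.filter (fun e => e ∈ R))).toFinset
          · have heR : e ∈ R := (hr1 e heS).1
            rw [if_pos heR, if_pos heS, if_pos heR]
            linarith
          · rw [if_neg heS]
            by_cases heR : e ∈ R
            · rw [if_pos heR, if_pos heR]
              have := hr4 e hel1 heR heS
              linarith
            · rw [if_neg heR, if_neg heR]
              linarith
        have hstep2 : ∑ e ∈ O1, (if e ∈ (larScan' f c B a
            (l1.filter (fun e => e ∈ R))).toFinset then LAR.MT f c B a l1 e R else 0) ≤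
            f (larScan' f c B a (l1.filter (fun e => e ∈ R))).toFinset := by
          rw [Finset.sum_ite_mem, hr2]
          apply Finset.sum_le_sum_of_subset_of_nonneg Finset.inter_subset_right
          intro x hx _
          exact hMTnn x hx
        rw [Finset.sum_add_distrib] at hstep
        linarith
      calc ∑ e ∈ O1, p ^ R.card * (1 - p) ^ (V1.card - R.card) *
            (if e ∈ R then LAR.MT f c B a l1 e R else 0)
          = p ^ R.card * (1 - p) ^ (V1.card - R.card) *
            ∑ e ∈ O1, (if e ∈ R then LAR.MT f c B a l1 e R else 0) := by
            rw [Finset.mul_sum]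
        _ ≤ p ^ R.card * (1 - p) ^ (V1.card - R.card) *
            (f (larScan' f c B a (l1.filter (fun e => e ∈ R))).toFinset +
            ∑ e ∈ O1, (if e ∈ R then a * c e * f (LAR.Tl f c B a l1 e R).toFinset / B else 0)) :=
            mul_le_mul_of_nonneg_left hinner (hw0 R)
        _ = p ^ R.card * (1 - p) ^ (V1.card - R.card) *
            f (larScan' f c B a (l1.filter (fun e => e ∈ R))).toFinset +
            ∑ e ∈ O1, p ^ R.card * (1 - p) ^ (V1.card - R.card) *
            (if e ∈ R then a * c e * f (LAR.Tl f c B a l1 e R).toFinset / B else 0) := by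
            rw [mul_add, Finset.mul_sum]
    -- bound on XX
    have hXle : XX ≤ p * a * (cost c O1 / B) * Y := by
      have hstep : ∀ e ∈ O1, ∑ R ∈ V1.powerset,
          p ^ R.card * (1 - p) ^ (V1.card - R.card) *
            (if e ∈ R then a * c e * f (LAR.Tl f c B a l1 e R).toFinset / B else 0) ≤
          c e * (p * a / B * Y) := by
        intro e he
        rw [hGsum e he]
        have hce : 0 < c e := hO1c e he
        have h1 : ∑ R ∈ V1.powerset, p ^ R.card * (1 - p) ^ (V1.card - R.card) *
            (a * c e * f (LAR.Tl f c B a l1 e R).toFinset / B) ≤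
            ∑ R ∈ V1.powerset, p ^ R.card * (1 - p) ^ (V1.card - R.card) *
            (a * c e / B * f (larScan' f c B a (l1.filter (fun e => e ∈ R))).toFinset) := by
          apply Finset.sum_le_sum
          intro R _
          apply mul_le_mul_of_nonneg_left _ (hw0 R)
          have h6 := ((run R).2.2.2.2.1 e (hO1l1 e he)).2.2
          have : a * c e * f (LAR.Tl f c B a l1 e R).toFinset / B =
              a * c e / B * f (LAR.Tl f c B a l1 e R).toFinset := by ring
          rw [this]
          apply mul_le_mul_of_nonneg_left h6 (by positivity)
        have h2 : ∑ R ∈ V1.powerset, p ^ R.card * (1 - p) ^ (V1.card - R.card) *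
            (a * c e / B * f (larScan' f c B a (l1.filter (fun e => e ∈ R))).toFinset) =
            a * c e / B * Y := by
          rw [hYdef, Finset.mul_sum]
          apply Finset.sum_congr rfl
          intro R _
          ring
        have h3 : p * (a * c e / B * Y) = c e * (p * a / B * Y) := by ring
        calc p * ∑ R ∈ V1.powerset, p ^ R.card * (1 - p) ^ (V1.card - R.card) *
              (a * c e * f (LAR.Tl f c B a l1 e R).toFinset / B)
            ≤ p * (a * c e / B * Y) := by
              rw [← h2]
              exact mul_le_mul_of_nonneg_left h1 hp0.le
          _ = c e * (p * a / B * Y) := h3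
      calc XX ≤ ∑ e ∈ O1, c e * (p * a / B * Y) := Finset.sum_le_sum hstep
        _ = (∑ e ∈ O1, c e) * (p * a / B * Y) := by rw [Finset.sum_mul]
        _ = p * a * (cost c O1 / B) * Y := by rw [cost]; ring
    -- combine the expectation bounds
    have hcomb : p * (1-p) * f O1 ≤ (1 + p * a * (cost c O1 / B)) * Y := by
      have hA : p * ((1-p) * f O1) ≤ p * (∑ R ∈ V1.powerset,
          p ^ R.card * (1 - p) ^ (V1.card - R.card) *
          f (O1 ∪ (larScan' f c B a (l1.filter (fun e => e ∈ R))).toFinset)) :=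
        mul_le_mul_of_nonneg_left hbfns hp0.le
      have hB2 : p * (∑ R ∈ V1.powerset,
          p ^ R.card * (1 - p) ^ (V1.card - R.card) *
          f (O1 ∪ (larScan' f c B a (l1.filter (fun e => e ∈ R))).toFinset)) ≤
          p * (Y + (XX + NN)) := mul_le_mul_of_nonneg_left hE4 hp0.le
      have hC2 : (1-p) * ZZ ≤ (1-p) * (Y + XX) :=
        mul_le_mul_of_nonneg_left hE7 (by linarith)
      have hexp1 : p * (Y + (XX + NN)) = p * Y + p * XX + p * NN := by ring
      have hexp2 : (1-p) * (Y + XX) = Y + XX - p * Y - p * XX := by ring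
      have hXY : XX ≤ p * a * (cost c O1 / B) * Y := hXle
      have hgl : p * (1-p) * f O1 = p * ((1-p) * f O1) := by ring
      have hgr : (1 + p * a * (cost c O1 / B)) * Y = Y + p * a * (cost c O1 / B) * Y := by ring
      linarith
    -- convert Y to F
    have haY : a * Y ≤ (a + 2) * F := by
      have h1 : ∑ R ∈ V1.powerset, p ^ R.card * (1 - p) ^ (V1.card - R.card) *
          (a * f (larScan' f c B a (l1.filter (fun e => e ∈ R))).toFinset) ≤
          ∑ R ∈ V1.powerset, p ^ R.card * (1 - p) ^ (V1.card - R.card) *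
          ((a + 2) * f (larOut f c B a l1 R emax)) := by
        apply Finset.sum_le_sum
        intro R _
        apply mul_le_mul_of_nonneg_left _ (hw0 R)
        have h8 := (run R).2.2.2.2.2.2.2
        have hsp := (hout R).2.1
        nlinarith [ha0]
      have h2 : ∑ R ∈ V1.powerset, p ^ R.card * (1 - p) ^ (V1.card - R.card) *
          (a * f (larScan' f c B a (l1.filter (fun e => e ∈ R))).toFinset) = a * Y := by
        rw [hYdef, Finset.mul_sum]
        apply Finset.sum_congr rfl
        intro R _
        ring
      have h3 : ∑ R ∈ V1.powerset, p ^ R.card * (1 - p) ^ (V1.card - R.card) *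
          ((a + 2) * f (larOut f c B a l1 R emax)) = (a + 2) * F := by
        rw [hFdef, Finset.mul_sum]
        apply Finset.sum_congr rfl
        intro R _
        ring
      linarith
    -- final algebra
    have hk0 : 0 ≤ 1 + p * a * (cost c O1 / B) := by
      have : 0 ≤ cost c O1 := Finset.sum_nonneg (fun e he => (hO1c e he).le)
      positivity
    calc a * (p * (1-p) * f O1) ≤ a * ((1 + p * a * (cost c O1 / B)) * Y) :=
          mul_le_mul_of_nonneg_left hcomb ha0.le
      _ = (1 + p * a * (cost c O1 / B)) * (a * Y) := by ring
      _ ≤ (1 + p * a * (cost c O1 / B)) * ((a + 2) * F) :=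
          mul_le_mul_of_nonneg_left haY hk0
  -- endgame
  refine ⟨hfeas, ?_⟩
  have hapos : 0 < a * (p * (1 - p)) := by
    apply mul_pos ha0
    apply mul_pos hp0
    linarith
  by_cases hbig : ∃ o ∈ O, B / 2 < c o
  · obtain ⟨o, hoO, hco⟩ := hbig
    set O1 : Finset α := O.erase o with hO1def
    have hoV : o ∈ V := hO hoO
    have hO1O : O1 ⊆ O := Finset.erase_subset o O
    have hO1V : O1 ⊆ V := hO1O.trans hO
    have hcnn : ∀ e ∈ O, 0 ≤ c e := fun e he => (hc e (hO he)).1.le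
    have hO1V1 : O1 ⊆ V1 := by
      intro e he
      have heO : e ∈ O := hO1O he
      have hene : e ≠ o := Finset.ne_of_mem_erase he
      rw [hV1def, Finset.mem_filter]
      refine ⟨hO heO, ?_⟩
      by_contra hcon
      push_neg at hcon
      have hpair : ({e, o} : Finset α) ⊆ O := by
        intro x hx
        rcases Finset.mem_insert.mp hx with rfl | hx
        · exact heO
        · rw [Finset.mem_singleton.mp hx]; exact hoO
      have hsum2 : c e + c o ≤ cost c O := by
        rw [cost]
        have := Finset.sum_le_sum_of_subset_of_nonneg hpair
          (fun x hx _ => hcnn x hx)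
        rwa [Finset.sum_pair hene] at this
      linarith
    have hcostO1 : cost c O1 ≤ B / 2 := by
      have hsum : cost c O1 + c o = cost c O := by
        rw [cost, cost, hO1def]
        exact Finset.sum_erase_add O c hoO
      linarith
    have hcostB : cost c O1 / B ≤ 1 / 2 := by
      rw [div_le_div_iff₀ hB (by norm_num : (0:ℝ) < 2)]
      linarith
    have hfO : f O ≤ f O1 + F := by
      have hio : insert o O1 = O := Finset.insert_erase hoO
      have hmo : f (insert o O1) - f O1 ≤ f (insert o ∅) - f ∅ :=
        hsub ∅ O1 (Finset.empty_subset _) hO1V o hoV (Finset.notMem_erase o O)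
      have hsi : f (insert o ∅) = f {o} := by norm_num
      have hfo : f {o} ≤ f {emax} := hemax o hoV
      rw [hio] at hmo
      rw [hsi, hnorm] at hmo
      linarith [hFemax]
    have hk := hkey O1 hO1V1
    have hk2 : a * (p * (1-p) * f O1) ≤ (1 + p * a * (1/2)) * ((a+2) * F) := by
      have hmono : (1 + p * a * (cost c O1 / B)) * ((a+2) * F) ≤
          (1 + p * a * (1/2)) * ((a+2) * F) := by
        apply mul_le_mul_of_nonneg_right _ (by positivity)
        have hpa : 0 ≤ p * a := by positivity
        nlinarith
      linarith
    -- numeric: (1 + pa/2)(a+2) ≤ 15.034 a p (1-p)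
    have hnum : (1 + p * a * (1/2)) * (a + 2) ≤ 15.034 * (a * (p * (1 - p))) := by
      rw [hps]
      nlinarith [ha2, hslb, hsub', halb, haub, sq_nonneg (s - 1.4142135), sq_nonneg (a - 2.19737)]
    have hO1F : f O1 ≤ 15.034 * F := by
      have h1 : a * (p * (1-p) * f O1) ≤ 15.034 * (a * (p * (1 - p))) * F := by
        calc a * (p * (1-p) * f O1) ≤ (1 + p * a * (1/2)) * ((a+2) * F) := hk2
          _ = ((1 + p * a * (1/2)) * (a + 2)) * F := by ring
          _ ≤ 15.034 * (a * (p * (1 - p))) * F := by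
              apply mul_le_mul_of_nonneg_right hnum hF0
      have h2 : a * (p * (1 - p)) * f O1 ≤ a * (p * (1 - p)) * (15.034 * F) := by
        calc a * (p * (1 - p)) * f O1 = a * (p * (1-p) * f O1) := by ring
          _ ≤ 15.034 * (a * (p * (1 - p))) * F := h1
          _ = a * (p * (1 - p)) * (15.034 * F) := by ring
      exact le_of_mul_le_mul_left h2 hapos
    linarith
  · push_neg at hbig
    have hOV1 : O ⊆ V1 := by
      intro e he
      rw [hV1def, Finset.mem_filter]
      exact ⟨hO he, hbig e he⟩
    have hcostB : cost c O / B ≤ 1 := by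
      rw [div_le_one hB]
      exact hOc
    have hk := hkey O hOV1
    have hk2 : a * (p * (1-p) * f O) ≤ (1 + p * a * 1) * ((a+2) * F) := by
      have hmono : (1 + p * a * (cost c O / B)) * ((a+2) * F) ≤
          (1 + p * a * 1) * ((a+2) * F) := by
        apply mul_le_mul_of_nonneg_right _ (by positivity)
        have hpa : 0 ≤ p * a := by positivity
        nlinarith
      linarith
    have hnum : (1 + p * a * 1) * (a + 2) ≤ 16.034 * (a * (p * (1 - p))) := by
      rw [hps]
      nlinarith [ha2, hslb, hsub', halb, haub, sq_nonneg (s - 1.4142135), sq_nonneg (a - 2.19737)]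
    have h1 : a * (p * (1-p) * f O) ≤ 16.034 * (a * (p * (1 - p))) * F := by
      calc a * (p * (1-p) * f O) ≤ (1 + p * a * 1) * ((a+2) * F) := hk2
        _ = ((1 + p * a * 1) * (a + 2)) * F := by ring
        _ ≤ 16.034 * (a * (p * (1 - p))) * F := by
            apply mul_le_mul_of_nonneg_right hnum hF0
    have h2 : a * (p * (1 - p)) * f O ≤ a * (p * (1 - p)) * (16.034 * F) := by
      calc a * (p * (1 - p)) * f O = a * (p * (1-p) * f O) := by ring
        _ ≤ 16.034 * (a * (p * (1 - p))) * F := h1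
        _ = a * (p * (1 - p)) * (16.034 * F) := by ring
    exact le_of_mul_le_mul_left h2 hapos
end

section
/- Consider the end of phase 1 of algorithm RLA, with candidate sequence U = {u_1, …, u_j} and random nested solutions ∅ = S_0 ⊆ S_1 ⊆ … ⊆ S_j, and let O be an optimal solution with r = argmax_{o∈O} c(o). For u_i ∈ U define τ(u_i) = i and S^{<u_i} = S_{i−1}, and τ(e) = +∞ for e ∈ V \ U; define O_{≤i} = {e ∈ O : τ(e) ≤ i} and O_{>i} = {e ∈ O : τ(e) > i}; define the indicator X_e = 1 if e ∈ O_{≤i} \ S_i or e ∈ S_i \ O, and X_e = 0 otherwise; define Y_e = 1 if e ∈ O_{≤i} \ (S_i ∪ {r}) or e ∈ S_i \ (O \ {r}), and Y_e = 0 otherwise. Then: (a) for any index i, E[f(S_i)] = E[ Σ_{e∈V} X_e · f(e | S^{<e}) ]; and (b) for any index i such that c(S_i) ≤ B − c(r), E[f(S_i)] = E[ Σ_{e∈V} Y_e · f(e | S^{<e}) ]. -/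
open scoped BigOperators Classical

/-- One step of a pass of phase 1 of algorithm `RLA` at threshold `θ`.  The state `run`
is the list of candidates `u_1, u_2, …` recorded so far (oldest first), each paired with
the outcome of its fair coin (`true` = it was added to the current solution).  An element
`e` not yet recorded whose density gain w.r.t. the current solution `S_j` is at least `θ`
and which fits the budget is recorded as the next candidate, consuming the next coin of
the coin sequence `ω`. -/
noncomputable def rlaStep {α : Type*} [DecidableEq α] (f : Finset α → ℝ) (c : α → ℝ)
    (B θ : ℝ) (ω : ℕ → Bool) (run : List (α × Bool)) (e : α) : List (α × Bool) :=
  if e ∈ run.map Prod.fst then run else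
  let Sj := ((run.filter (fun q => q.2)).map Prod.fst).toFinset
  if θ ≤ marg f e Sj / c e ∧ cost c Sj + c e ≤ B then run ++ [(e, ω run.length)]
  else run

/-- Phase 1 of algorithm `RLA`: perform `N` passes over the ground set (in the fixed
order `l`); pass number `t` uses the threshold `(1 − ε')^t · θ0`. -/
noncomputable def rlaPhase1 {α : Type*} [DecidableEq α] (f : Finset α → ℝ) (c : α → ℝ)
    (B θ0 ε' : ℝ) (N : ℕ) (ω : ℕ → Bool) (l : List α) : List (α × Bool) :=
  (List.range N).foldl (fun run t => l.foldl (rlaStep f c B ((1 - ε') ^ t * θ0) ω) run)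
    []

/-- The list of elements accepted (coin `true`) in a run, in order of insertion. -/
def accList {α : Type*} (run : List (α × Bool)) : List α :=
  (run.filter (fun q => q.2)).map Prod.fst

/-- `Sset run i` is the solution `S_i`: the set of elements accepted among the first `i`
candidates. -/
noncomputable def Sset {α : Type*} [DecidableEq α] (run : List (α × Bool)) (i : ℕ) :
    Finset α := (accList (run.take i)).toFinset

/-- `Sbefore run e = S^{<e}`: the solution just before the candidate `e = u_i` was
considered, i.e. `S_{i−1}`. -/
noncomputable def Sbefore {α : Type*} [DecidableEq α] (run : List (α × Bool)) (e : α) :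
    Finset α := Sset run (List.idxOf e (run.map Prod.fst))

/-- The indicator `X_e` (as a real number): `X_e = 1` iff `e ∈ O_{≤i} \ S_i` or
`e ∈ S_i \ O`, where `O_{≤i} = {e ∈ O : τ(e) ≤ i}`. -/
noncomputable def xind {α : Type*} [DecidableEq α] (O : Finset α)
    (run : List (α × Bool)) (i : ℕ) (e : α) : ℝ :=
  if (e ∈ O ∧ e ∈ ((run.take i).map Prod.fst).toFinset ∧ e ∉ Sset run i) ∨
     (e ∈ Sset run i ∧ e ∉ O) then 1 else 0

/-- The indicator `Y_e` (as a real number): `Y_e = 1` iff `e ∈ O_{≤i} \ (S_i ∪ {r})` or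
`e ∈ S_i \ (O \ {r})`. -/
noncomputable def yind {α : Type*} [DecidableEq α] (O : Finset α) (r : α)
    (run : List (α × Bool)) (i : ℕ) (e : α) : ℝ :=
  if (e ∈ O ∧ e ∈ ((run.take i).map Prod.fst).toFinset ∧ e ∉ Sset run i ∧ e ≠ r) ∨
     (e ∈ Sset run i ∧ ¬ (e ∈ O ∧ e ≠ r)) then 1 else 0

/-- A finite tuple of `M` fair-coin outcomes, viewed as an infinite coin sequence
(coins beyond the `M`-th are irrelevant: at most `M` coins are ever consumed). -/
def coinSeq {M : ℕ} (v : Fin M → Bool) : ℕ → Bool :=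
  fun k => if h : k < M then v ⟨k, h⟩ else false


section AuxRLA

open List

variable {α : Type*} [DecidableEq α]

private lemma ite_congr_prop {p q : Prop} {ip : Decidable p} {iq : Decidable q}
    (h : p ↔ q) (x y : ℝ) : (@ite _ p ip x y) = (@ite _ q iq x y) := by
  cases ip with
  | isTrue hp =>
    cases iq with
    | isTrue hq => rfl
    | isFalse hq => exact absurd (h.1 hp) hq
  | isFalse hp =>
    cases iq with
    | isTrue hq => exact absurd (h.2 hq) hp
    | isFalse hq => rfl

private lemma foldl_rel_aux {β γ : Type*} (Rel : β → β → Prop) (g g' : β → γ → β)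
    (hstep : ∀ b b' x, Rel b b' → Rel (g b x) (g' b' x)) :
    ∀ (L : List γ) (b b' : β), Rel b b' → Rel (L.foldl g b) (L.foldl g' b')
  | [], _, _, h => h
  | _ :: t, b, b', h => foldl_rel_aux Rel g g' hstep t _ _ (hstep b b' _ h)

private lemma foldl_inv_aux {β γ : Type*} (P : β → Prop) (g : β → γ → β) :
    ∀ L : List γ, (∀ b x, x ∈ L → P b → P (g b x)) → ∀ b, P b → P (L.foldl g b)
  | [], _, _, h => h
  | x :: t, hstep, b, h =>
    foldl_inv_aux P g t (fun b y hy => hstep b y (List.mem_cons_of_mem _ hy)) _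
      (hstep b x List.mem_cons_self h)

private lemma rlaStep_cases (f : Finset α → ℝ) (c : α → ℝ) (B θ : ℝ)
    (run : List (α × Bool)) (e : α) :
    (∀ ω : ℕ → Bool, rlaStep f c B θ ω run e = run) ∨
      (e ∉ run.map Prod.fst ∧
        ∀ ω : ℕ → Bool, rlaStep f c B θ ω run e = run ++ [(e, ω run.length)]) := by
  by_cases h1 : e ∈ run.map Prod.fst
  · exact Or.inl fun ω => by simp [rlaStep, h1]
  · by_cases h2 : θ ≤ marg f e ((run.filter (fun q => q.2)).map Prod.fst).toFinset / c e ∧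
        cost c ((run.filter (fun q => q.2)).map Prod.fst).toFinset + c e ≤ B
    · exact Or.inr ⟨h1, fun ω => by simp [rlaStep, h1, h2]⟩
    · exact Or.inl fun ω => by simp [rlaStep, h1, h2]

private def RunInv (l : List α) (run : List (α × Bool)) : Prop :=
  (run.map Prod.fst).Nodup ∧ ∀ q ∈ run, q.1 ∈ l

private lemma runInv_step {l : List α} {run : List (α × Bool)} {e : α}
    (f : Finset α → ℝ) (c : α → ℝ) (B θ : ℝ) (ω : ℕ → Bool)
    (h : RunInv l run) (he : e ∈ l) : RunInv l (rlaStep f c B θ ω run e) := by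
  rcases rlaStep_cases f c B θ run e with h1 | ⟨hne, h1⟩ <;> rw [h1 ω]
  · exact h
  · refine ⟨?_, ?_⟩
    · rw [List.map_append]
      simp only [List.map_cons, List.map_nil]
      rw [List.nodup_append]
      refine ⟨h.1, List.nodup_singleton e, ?_⟩
      intro a ha b hae
      rw [List.mem_singleton] at hae
      subst hae
      rintro rfl
      exact hne ha
    · intro q hq
      rcases List.mem_append.1 hq with hq | hq
      · exact h.2 q hq
      · rw [List.mem_singleton] at hq
        subst hq
        exact he

private lemma runInv_phase1 (f : Finset α → ℝ) (c : α → ℝ) (B θ0 ε' : ℝ) (n : ℕ)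
    (ω : ℕ → Bool) (l : List α) : RunInv l (rlaPhase1 f c B θ0 ε' n ω l) := by
  unfold rlaPhase1
  refine foldl_inv_aux _ _ (List.range n) (fun run t _ hrun => ?_) []
    ⟨List.nodup_nil, by simp⟩
  exact foldl_inv_aux _ _ l (fun run e he h => runInv_step f c B _ ω h he) run hrun

private lemma runInv_length {l : List α} {run : List (α × Bool)} (h : RunInv l run) :
    run.length ≤ l.length := by
  have h1 : (run.map Prod.fst).toFinset.card = run.length := by
    rw [List.toFinset_card_of_nodup h.1, List.length_map]
  have h2 : (run.map Prod.fst).toFinset ⊆ l.toFinset := by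
    intro x hx
    rw [List.mem_toFinset] at hx ⊢
    rcases List.mem_map.1 hx with ⟨q, hq, rfl⟩
    exact h.2 q hq
  calc run.length = (run.map Prod.fst).toFinset.card := h1.symm
    _ ≤ l.toFinset.card := Finset.card_le_card h2
    _ ≤ l.length := l.toFinset_card_le

private def RelRun (k : ℕ) (ω ω' : ℕ → Bool) (run run' : List (α × Bool)) : Prop :=
  (run = run' ∧ run.length ≤ k) ∨
    (∃ pre a, pre.length = k ∧ run.take (k + 1) = pre ++ [(a, ω k)] ∧
      run'.take (k + 1) = pre ++ [(a, ω' k)])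

private lemma take_concat {β : Type*} {L : List β} {k : ℕ} (hk : k < L.length) :
    L.take (k + 1) = L.take k ++ [L[k]] := by
  rw [List.take_succ, List.getElem?_eq_getElem hk]
  rfl

private lemma take_rlaStep {run : List (α × Bool)} {k : ℕ} (hk : k + 1 ≤ run.length)
    (f : Finset α → ℝ) (c : α → ℝ) (B θ : ℝ) (ω : ℕ → Bool) (e : α) :
    (rlaStep f c B θ ω run e).take (k + 1) = run.take (k + 1) := by
  rcases rlaStep_cases f c B θ run e with h1 | ⟨_, h1⟩ <;> rw [h1 ω]
  rw [List.take_append_of_le_length hk]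

private lemma relRun_step {k : ℕ} {ω ω' : ℕ → Bool} (hag : ∀ j, j < k → ω j = ω' j)
    {run run' : List (α × Bool)} (h : RelRun k ω ω' run run')
    (f : Finset α → ℝ) (c : α → ℝ) (B θ : ℝ) (e : α) :
    RelRun k ω ω' (rlaStep f c B θ ω run e) (rlaStep f c B θ ω' run' e) := by
  rcases h with ⟨rfl, hlen⟩ | ⟨pre, a, hpre, h1, h2⟩
  · rcases rlaStep_cases f c B θ run e with h1 | ⟨hne, h1⟩
    · rw [h1 ω, h1 ω']
      exact Or.inl ⟨rfl, hlen⟩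
    · rw [h1 ω, h1 ω']
      rcases lt_or_eq_of_le hlen with hlt | heq
      · refine Or.inl ⟨?_, ?_⟩
        · rw [hag run.length hlt]
        · rw [List.length_append]
          simpa using hlt
      · subst heq
        exact Or.inr ⟨run, e, rfl,
          by rw [List.take_of_length_le (by simp)],
          by rw [List.take_of_length_le (by simp)]⟩
  · have hlen : k + 1 ≤ run.length := by
      have h3 := congrArg List.length h1
      rw [List.length_take, List.length_append, hpre] at h3
      simp only [List.length_singleton] at h3
      omega
    have hlen' : k + 1 ≤ run'.length := by
      have h3 := congrArg List.length h2
      rw [List.length_take, List.length_append, hpre] at h3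
      simp only [List.length_singleton] at h3
      omega
    exact Or.inr ⟨pre, a, hpre, by rw [take_rlaStep hlen, h1],
      by rw [take_rlaStep hlen', h2]⟩

private lemma relRun_phase1 (f : Finset α → ℝ) (c : α → ℝ) (B θ0 ε' : ℝ) (n : ℕ)
    {k : ℕ} {ω ω' : ℕ → Bool} (hag : ∀ j, j < k → ω j = ω' j) (l : List α) :
    RelRun k ω ω' (rlaPhase1 f c B θ0 ε' n ω l) (rlaPhase1 f c B θ0 ε' n ω' l) := by
  unfold rlaPhase1
  refine foldl_rel_aux (RelRun k ω ω') _ _ (fun b b' t h => ?_) (List.range n) [] []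
    (Or.inl ⟨rfl, Nat.zero_le k⟩)
  exact foldl_rel_aux (RelRun k ω ω') _ _
    (fun b b' e h => relRun_step hag h f c B _ e) l b b' h

private lemma mem_Sset_iff (run : List (α × Bool)) (i : ℕ) (e : α) :
    e ∈ Sset run i ↔ (e, true) ∈ run.take i := by
  simp only [Sset, accList, List.mem_toFinset, List.mem_map, List.mem_filter]
  constructor
  · rintro ⟨⟨x, b⟩, ⟨hmem, hb⟩, rfl⟩
    cases b
    · simp at hb
    · exact hmem
  · intro h
    exact ⟨(e, true), ⟨h, rfl⟩, rfl⟩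

private lemma mem_takeFsts_iff (run : List (α × Bool)) (i : ℕ) (e : α) :
    e ∈ ((run.take i).map Prod.fst).toFinset ↔
      (e, true) ∈ run.take i ∨ (e, false) ∈ run.take i := by
  simp only [List.mem_toFinset, List.mem_map]
  constructor
  · rintro ⟨⟨x, b⟩, hmem, rfl⟩
    cases b
    · exact Or.inr hmem
    · exact Or.inl hmem
  · rintro (h | h)
    exacts [⟨(e, true), h, rfl⟩, ⟨(e, false), h, rfl⟩]

private lemma mem_take_char {run : List (α × Bool)} (hnd : (run.map Prod.fst).Nodup)
    {k : ℕ} (hk : k < run.length) {e : α} (hke : (run[k]).1 = e) (i : ℕ) (b : Bool) :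
    (e, b) ∈ run.take i ↔ k < i ∧ (run[k]).2 = b := by
  constructor
  · intro h
    rcases List.mem_iff_getElem.1 h with ⟨j, hj, hje⟩
    rw [List.length_take] at hj
    have hji : j < i := lt_of_lt_of_le hj (min_le_left _ _)
    have hjl : j < run.length := lt_of_lt_of_le hj (min_le_right _ _)
    rw [List.getElem_take] at hje
    have hj1 : (run[j]).1 = e := by rw [hje]
    have hjk : j = k := by
      have hmap : (run.map Prod.fst)[j]'(by simpa using hjl) =
          (run.map Prod.fst)[k]'(by simpa using hk) := by
        simp only [List.getElem_map]
        rw [hj1, hke]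
      exact hnd.getElem_inj_iff.1 hmap
    subst hjk
    refine ⟨hji, ?_⟩
    rw [hje]
  · rintro ⟨hki, hb⟩
    have hrk : run[k] = (e, b) := by
      rw [← hke, ← hb]
    refine List.mem_iff_getElem.2 ⟨k, ?_, ?_⟩
    · rw [List.length_take]
      exact lt_min hki hk
    · rw [List.getElem_take]
      exact hrk

private lemma indexOf_eq_of_take {L : List α} {k : ℕ} {P : List α} {e : α}
    (h : L.take (k + 1) = P ++ [e]) (hP : P.length = k) (he : e ∉ P) :
    List.idxOf e L = k := by
  conv_lhs => rw [← List.take_append_drop (k + 1) L, h]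
  rw [List.append_assoc, List.singleton_append, List.idxOf_append_of_notMem he,
    List.idxOf_cons_self, hP, Nat.add_zero]

private lemma not_mem_take_indexOf (e : α) : ∀ L : List α, e ∉ L.take (List.idxOf e L)
  | [] => by simp
  | a :: L => by
    by_cases h : a = e
    · subst h
      rw [List.idxOf_cons_self]
      simp
    · rw [List.idxOf_cons_ne _ h, Nat.succ_eq_add_one, List.take_succ_cons]
      simp only [List.mem_cons]
      rintro (rfl | hmem)
      · exact h rfl
      · exact not_mem_take_indexOf e L hmem

private lemma indexOf_getElem_nodup {L : List α} (hnd : L.Nodup) {k : ℕ}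
    (hk : k < L.length) : List.idxOf L[k] L = k := by
  refine indexOf_eq_of_take (take_concat hk) (by rw [List.length_take]; omega) ?_
  intro hmem
  rcases List.mem_iff_getElem.1 hmem with ⟨j, hj, hje⟩
  rw [List.length_take] at hj
  have hjk : j < k := lt_of_lt_of_le hj (min_le_left _ _)
  have hjl : j < L.length := lt_of_lt_of_le hj (min_le_right _ _)
  rw [List.getElem_take] at hje
  exact absurd (hnd.getElem_inj_iff.1 hje) (Nat.ne_of_lt hjk)

private lemma f_Sset_eq (f : Finset α → ℝ) (hnorm : f ∅ = 0) (V : Finset α)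
    {run : List (α × Bool)} (hnd : (run.map Prod.fst).Nodup) (hV : ∀ q ∈ run, q.1 ∈ V) :
    ∀ i : ℕ, f (Sset run i) =
      ∑ e ∈ V, (if (e, true) ∈ run.take i then (1 : ℝ) else 0) *
        marg f e (Sbefore run e) := by
  intro i
  induction i with
  | zero => simp [Sset, accList, hnorm]
  | succ i ih =>
    by_cases hi : i < run.length
    · have htake : run.take (i + 1) = run.take i ++ [run[i]] := take_concat hi
      rcases hb : (run[i]).2 with _ | _
      · -- coin false : nothing changes
        have hfilter : List.filter (fun q : α × Bool => q.2) [run[i]] = [] := by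
          simp [hb]
        have hS : Sset run (i + 1) = Sset run i := by
          simp only [Sset, accList, htake, List.filter_append, hfilter,
            List.append_nil]
        rw [hS, ih]
        refine Finset.sum_congr rfl fun e he => ?_
        have hiff : ((e, true) ∈ run.take (i + 1)) ↔ ((e, true) ∈ run.take i) := by
          rw [htake]
          simp only [List.mem_append, List.mem_singleton]
          constructor
          · rintro (h | h)
            · exact h
            · exfalso
              rw [← h] at hb
              simp at hb
          · exact Or.inl
        rw [if_congr hiff rfl rfl]
      · -- coin true : run[i].1 is added
        set a := (run[i]).1 with ha
        have hq : run[i] = (a, true) := by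
          have h0 := Prod.mk.eta (p := run[i])
          rw [hb] at h0
          exact h0.symm
        have hfilter : List.filter (fun q : α × Bool => q.2) [run[i]] = [run[i]] := by
          simp [hb]
        have hS : Sset run (i + 1) = insert a (Sset run i) := by
          simp only [Sset, accList, htake, List.filter_append, hfilter, List.map_append,
            List.toFinset_append, hq, List.map_cons, List.map_nil]
          ext x
          simp [or_comm]
        have hmaplen : i < (run.map Prod.fst).length := by simpa using hi
        have hindex : List.idxOf a (run.map Prod.fst) = i := by
          have h1 : (run.map Prod.fst)[i]'hmaplen = a := by
            rw [List.getElem_map]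
          rw [← h1]
          exact indexOf_getElem_nodup hnd hmaplen
        have hbefore : Sbefore run a = Sset run i := by
          rw [Sbefore, hindex]
        have hnotmemtake : (a, true) ∉ run.take i := by
          rw [mem_take_char hnd hi ha.symm i true]
          simp
        have haV : a ∈ V := hV run[i] (List.getElem_mem hi)
        rw [hS]
        have hmarg : f (insert a (Sset run i)) =
            f (Sset run i) + marg f a (Sbefore run a) := by
          rw [hbefore, marg]
          ring
        rw [hmarg, ih]
        have hsplit : ∀ e ∈ V,
            (if (e, true) ∈ run.take (i + 1) then (1 : ℝ) else 0) *
                marg f e (Sbefore run e)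
              = (if (e, true) ∈ run.take i then (1 : ℝ) else 0) *
                  marg f e (Sbefore run e) +
                (if e = a then marg f e (Sbefore run e) else 0) := by
          intro e _
          by_cases hea : e = a
          · subst hea
            rw [htake, hq]
            rw [if_pos (by simp), if_neg hnotmemtake, if_pos rfl]
            ring
          · have hiff : ((e, true) ∈ run.take i ++ [run[i]]) ↔
                ((e, true) ∈ run.take i) := by
              rw [hq]
              simp only [List.mem_append, List.mem_singleton]
              constructor
              · rintro (h | h)
                · exact h
                · exact absurd (congrArg Prod.fst h) hea
              · exact Or.inl
            rw [htake, if_congr hiff rfl rfl, if_neg hea, add_zero]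
        rw [Finset.sum_congr rfl hsplit, Finset.sum_add_distrib]
        congr 1
        rw [Finset.sum_ite_eq' V a (fun e => marg f e (Sbefore run e)), if_pos haV]
    · have hle : run.length ≤ i := le_of_not_gt hi
      have e1 : run.take (i + 1) = run.take i := by
        rw [List.take_of_length_le hle, List.take_of_length_le (le_trans hle (Nat.le_succ i))]
      have e2 : Sset run (i + 1) = Sset run i := by
        simp only [Sset, e1]
      rw [e2]
      simp only [e1]
      exact ih

private lemma core_sum (f : Finset α → ℝ) (c : α → ℝ) (B θ0 ε' : ℝ) (n : ℕ)
    (l : List α) (M : ℕ) (hM : M = l.length) (i : ℕ) (e : α) :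
    ∑ v : Fin M → Bool,
        (if (e, true) ∈ (rlaPhase1 f c B θ0 ε' n (coinSeq v) l).take i then (1 : ℝ) else 0) *
          marg f e (Sbefore (rlaPhase1 f c B θ0 ε' n (coinSeq v) l) e)
      = ∑ v : Fin M → Bool,
        (if ((e, true) ∈ (rlaPhase1 f c B θ0 ε' n (coinSeq v) l).take i ∨
              (e, false) ∈ (rlaPhase1 f c B θ0 ε' n (coinSeq v) l).take i) ∧
            (e, true) ∉ (rlaPhase1 f c B θ0 ε' n (coinSeq v) l).take i
          then (1 : ℝ) else 0) *
          marg f e (Sbefore (rlaPhase1 f c B θ0 ε' n (coinSeq v) l) e) := by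
  classical
  set run : (Fin M → Bool) → List (α × Bool) :=
    fun v => rlaPhase1 f c B θ0 ε' n (coinSeq v) l with hrundef
  set C : (Fin M → Bool) → Prop :=
    fun v => (e, true) ∈ (run v).take i ∨ (e, false) ∈ (run v).take i with hCdef
  set K : (Fin M → Bool) → ℕ :=
    fun v => List.idxOf e ((run v).map Prod.fst) with hKdef
  set φ : (Fin M → Bool) → (Fin M → Bool) :=
    fun v j => if C v ∧ (j : ℕ) = K v then ! v j else v j with hφdef
  have hφ_eval : ∀ (v : Fin M → Bool) (j : Fin M),
      φ v j = if C v ∧ (j : ℕ) = K v then ! v j else v j := fun _ _ => rfl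
  have key : ∀ v, C v → ∃ hkM : K v < M, K (φ v) = K v ∧ C (φ v) ∧
      ((e, true) ∈ (run v).take i ↔ v ⟨K v, hkM⟩ = true) ∧
      ((e, true) ∈ (run (φ v)).take i ↔ v ⟨K v, hkM⟩ = false) ∧
      Sbefore (run (φ v)) e = Sbefore (run v) e := by
    intro v hcond
    have hinv : RunInv l (run v) := runInv_phase1 f c B θ0 ε' n (coinSeq v) l
    have hmem : e ∈ (run v).map Prod.fst := by
      rcases hcond with h | h <;>
        exact List.mem_map.2 ⟨_, List.mem_of_mem_take h, rfl⟩
    have hk : K v < (run v).length := by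
      have h0 := List.idxOf_lt_length_iff.2 hmem
      simpa using h0
    have hke : ((run v)[K v]'hk).1 = e := by
      have h1 : ((run v).map Prod.fst)[K v]'(by simpa using hk) = e :=
        List.getElem_idxOf (by simpa using hk)
      rwa [List.getElem_map] at h1
    have hki : K v < i := by
      rcases hcond with h | h <;> exact ((mem_take_char hinv.1 hk hke i _).1 h).1
    have hkM : K v < M := lt_of_lt_of_le hk (hM ▸ runInv_length hinv)
    have hφat : φ v ⟨K v, hkM⟩ = ! v ⟨K v, hkM⟩ := by
      rw [hφ_eval, if_pos ⟨hcond, rfl⟩]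
    have hφne : ∀ j : Fin M, (j : ℕ) ≠ K v → φ v j = v j := by
      intro j hj
      rw [hφ_eval, if_neg (fun h => hj h.2)]
    have hag : ∀ j, j < K v → coinSeq v j = coinSeq (φ v) j := by
      intro j hj
      have hjM : j < M := lt_trans hj hkM
      simp only [coinSeq, dif_pos hjM]
      exact (hφne ⟨j, hjM⟩ (Nat.ne_of_lt hj)).symm
    have hrel : RelRun (K v) (coinSeq v) (coinSeq (φ v)) (run v) (run (φ v)) :=
      relRun_phase1 f c B θ0 ε' n hag l
    rcases hrel with ⟨heq, hlen⟩ | ⟨pre, a0, hpre, h1, h2⟩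
    · exact absurd hk (not_lt.2 hlen)
    · have htk : (run v).take (K v + 1) = (run v).take (K v) ++ [(run v)[K v]'hk] :=
        take_concat hk
      obtain ⟨hpre_eq, hpair⟩ := List.append_inj' (h1.symm.trans htk) (by simp)
      have hpair' : (a0, coinSeq v (K v)) = (run v)[K v]'hk := by
        injection hpair
      have ha0 : a0 = e := by
        rw [← hke, ← hpair']
      have hcoin : ((run v)[K v]'hk).2 = coinSeq v (K v) := by
        rw [← hpair']
      have hlen' : K v + 1 ≤ (run (φ v)).length := by
        have h3 := congrArg List.length h2
        rw [List.length_take, List.length_append, hpre] at h3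
        simp only [List.length_singleton] at h3
        omega
    -- run' facts
      have hk' : K v < (run (φ v)).length := by omega
      have htk' : (run (φ v)).take (K v + 1) =
          (run (φ v)).take (K v) ++ [(run (φ v))[K v]'hk'] := take_concat hk'
      obtain ⟨hpre_eq', hpair2⟩ := List.append_inj' (h2.symm.trans htk') (by simp)
      have hpair2' : (a0, coinSeq (φ v) (K v)) = (run (φ v))[K v]'hk' := by
        injection hpair2
      have hke' : ((run (φ v))[K v]'hk').1 = e := by
        rw [← hpair2', ha0]
      have hcoin' : ((run (φ v))[K v]'hk').2 = coinSeq (φ v) (K v) := by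
        rw [← hpair2']
      have hcsv : coinSeq v (K v) = v ⟨K v, hkM⟩ := by
        simp [coinSeq, hkM]
      have hcsv' : coinSeq (φ v) (K v) = ! v ⟨K v, hkM⟩ := by
        simp only [coinSeq, dif_pos hkM]
        exact hφat
      have hinv' : RunInv l (run (φ v)) := runInv_phase1 f c B θ0 ε' n (coinSeq (φ v)) l
      -- the index of e in run (φ v) is also K v
      have hePnot : e ∉ ((run v).take (K v)).map Prod.fst := by
        intro hmem2
        have h5 : e ∈ ((run v).map Prod.fst).take (K v) := by
          rw [← List.map_take]
          exact hmem2
        exact not_mem_take_indexOf e ((run v).map Prod.fst) h5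
      have hmap : ((run (φ v)).map Prod.fst).take (K v + 1) =
          ((run v).take (K v)).map Prod.fst ++ [e] := by
        rw [← List.map_take, h2, hpre_eq, List.map_append, ha0]
        rfl
      have hK' : K (φ v) = K v := by
        simp only [hKdef]
        exact indexOf_eq_of_take hmap
          (by rw [List.length_map, List.length_take]; exact min_eq_left hk.le) hePnot
      have hm1 : (e, true) ∈ (run v).take i ↔ v ⟨K v, hkM⟩ = true := by
        rw [mem_take_char hinv.1 hk hke i true, hcoin, hcsv]
        simp [hki]
      have hm2 : (e, true) ∈ (run (φ v)).take i ↔ v ⟨K v, hkM⟩ = false := by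
        rw [mem_take_char hinv'.1 hk' hke' i true, hcoin', hcsv']
        simp [hki]
      have hcond' : C (φ v) := by
        cases hvb : v ⟨K v, hkM⟩
        · exact Or.inl (hm2.2 hvb)
        · refine Or.inr ?_
          rw [mem_take_char hinv'.1 hk' hke' i false, hcoin', hcsv', hvb]
          simp [hki]
      have hbef : Sbefore (run (φ v)) e = Sbefore (run v) e := by
        have htkeq : (run (φ v)).take (K v) = (run v).take (K v) :=
          hpre_eq'.symm.trans hpre_eq
        show Sset (run (φ v)) (List.idxOf e ((run (φ v)).map Prod.fst)) =
          Sset (run v) (List.idxOf e ((run v).map Prod.fst))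
        have hK'' : List.idxOf e ((run (φ v)).map Prod.fst) = K v := hK'
        have hK0 : List.idxOf e ((run v).map Prod.fst) = K v := rfl
        rw [hK'', hK0]
        simp only [Sset, htkeq]
      exact ⟨hkM, hK', hcond', hm1, hm2, hbef⟩
  have hφnot : ∀ v, ¬ C v → φ v = v := by
    intro v hc
    funext j
    rw [hφ_eval, if_neg (fun h => hc h.1)]
  have hinvol : Function.Involutive φ := by
    intro v
    by_cases hc : C v
    · obtain ⟨hkM, hK', hcond', _, _, _⟩ := key v hc
      funext j
      by_cases hj : (j : ℕ) = K v
      · have h1 : φ (φ v) j = ! φ v j := by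
          rw [hφ_eval, if_pos ⟨hcond', by rw [hK']; exact hj⟩]
        have h2 : φ v j = ! v j := by
          rw [hφ_eval, if_pos ⟨hc, hj⟩]
        rw [h1, h2, Bool.not_not]
      · have h1 : φ (φ v) j = φ v j := by
          rw [hφ_eval, if_neg (fun h => hj (by rw [← hK']; exact h.2))]
        have h2 : φ v j = v j := by
          rw [hφ_eval, if_neg (fun h => hj h.2)]
        rw [h1, h2]
    · rw [hφnot v hc, hφnot v hc]
  have hAB : ∀ v : Fin M → Bool,
      (if (e, true) ∈ (run v).take i then (1 : ℝ) else 0) * marg f e (Sbefore (run v) e)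
        = (if C (φ v) ∧ (e, true) ∉ (run (φ v)).take i then (1 : ℝ) else 0) *
            marg f e (Sbefore (run (φ v)) e) := by
    intro v
    by_cases hc : C v
    · obtain ⟨hkM, hK', hcond', hm1, hm2, hbef⟩ := key v hc
      rw [hbef]
      congr 1
      by_cases hvb : v ⟨K v, hkM⟩ = true
      · rw [if_pos (hm1.2 hvb), if_pos ⟨hcond', fun hmem => by
          have h5 := hm2.1 hmem
          rw [hvb] at h5
          simp at h5⟩]
      · have hfalse : v ⟨K v, hkM⟩ = false := by
          cases h : v ⟨K v, hkM⟩
          · rfl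
          · exact absurd h hvb
        rw [if_neg (fun hmem => hvb (hm1.1 hmem)),
          if_neg (fun hcontra => hcontra.2 (hm2.2 hfalse))]
    · rw [hφnot v hc]
      congr 1
      rw [if_neg (fun h => hc (Or.inl h)), if_neg (fun h => hc h.1)]
  calc ∑ v : Fin M → Bool,
        (if (e, true) ∈ (run v).take i then (1 : ℝ) else 0) * marg f e (Sbefore (run v) e)
      = ∑ v : Fin M → Bool,
          (if C (φ v) ∧ (e, true) ∉ (run (φ v)).take i then (1 : ℝ) else 0) *
            marg f e (Sbefore (run (φ v)) e) :=
        Finset.sum_congr rfl fun v _ => hAB v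
    _ = ∑ v : Fin M → Bool,
          (if C v ∧ (e, true) ∉ (run v).take i then (1 : ℝ) else 0) *
            marg f e (Sbefore (run v) e) := by
        refine Fintype.sum_equiv (Function.Involutive.toPerm φ hinvol)
          _ _ (fun v => ?_)
        rfl

private lemma key_identity (f : Finset α → ℝ) (hnorm : f ∅ = 0) (c : α → ℝ)
    (B θ0 ε' : ℝ) (n : ℕ) (l : List α) (V : Finset α) (hlV : l.toFinset = V)
    (M : ℕ) (hM : M = l.length) (i : ℕ) (P1 : α → Prop) :
    ∑ v : Fin M → Bool, f (Sset (rlaPhase1 f c B θ0 ε' n (coinSeq v) l) i)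
      = ∑ v : Fin M → Bool, ∑ e ∈ V,
          (if (P1 e ∧
                e ∈ (((rlaPhase1 f c B θ0 ε' n (coinSeq v) l).take i).map Prod.fst).toFinset ∧
                e ∉ Sset (rlaPhase1 f c B θ0 ε' n (coinSeq v) l) i) ∨
              (e ∈ Sset (rlaPhase1 f c B θ0 ε' n (coinSeq v) l) i ∧ ¬ P1 e)
            then (1 : ℝ) else 0) *
            marg f e (Sbefore (rlaPhase1 f c B θ0 ε' n (coinSeq v) l) e) := by
  classical
  set run : (Fin M → Bool) → List (α × Bool) :=
    fun v => rlaPhase1 f c B θ0 ε' n (coinSeq v) l with hrundef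
  have hinv : ∀ v, RunInv l (run v) := fun v => runInv_phase1 f c B θ0 ε' n (coinSeq v) l
  have hV : ∀ v, ∀ q ∈ run v, q.1 ∈ V := by
    intro v q hq
    rw [← hlV, List.mem_toFinset]
    exact (hinv v).2 q hq
  have lhs1 : ∀ v : Fin M → Bool, f (Sset (run v) i) =
      ∑ e ∈ V, (if (e, true) ∈ (run v).take i then (1 : ℝ) else 0) *
        marg f e (Sbefore (run v) e) :=
    fun v => f_Sset_eq f hnorm V (hinv v).1 (hV v) i
  have rhs1 : ∀ (v : Fin M → Bool), ∀ e ∈ V,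
      (if (P1 e ∧ e ∈ (((run v).take i).map Prod.fst).toFinset ∧ e ∉ Sset (run v) i) ∨
          (e ∈ Sset (run v) i ∧ ¬ P1 e) then (1 : ℝ) else 0) *
          marg f e (Sbefore (run v) e)
        = (if (e, true) ∈ (run v).take i ∧ ¬ P1 e then (1 : ℝ) else 0) *
            marg f e (Sbefore (run v) e)
          + (if P1 e ∧ ((e, true) ∈ (run v).take i ∨ (e, false) ∈ (run v).take i) ∧
                (e, true) ∉ (run v).take i then (1 : ℝ) else 0) *
              marg f e (Sbefore (run v) e) := by
    intro v e _
    rw [← add_mul]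
    congr 1
    rw [if_congr (by
      rw [mem_Sset_iff, mem_takeFsts_iff]) rfl rfl]
    by_cases h1 : (e, true) ∈ (run v).take i <;>
      by_cases h2 : P1 e <;>
        simp [h1, h2]
  have lhs2 : ∀ (v : Fin M → Bool), ∀ e ∈ V,
      (if (e, true) ∈ (run v).take i then (1 : ℝ) else 0) * marg f e (Sbefore (run v) e)
        = (if (e, true) ∈ (run v).take i ∧ ¬ P1 e then (1 : ℝ) else 0) *
            marg f e (Sbefore (run v) e)
          + (if (e, true) ∈ (run v).take i ∧ P1 e then (1 : ℝ) else 0) *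
              marg f e (Sbefore (run v) e) := by
    intro v e _
    rw [← add_mul]
    congr 1
    by_cases h1 : (e, true) ∈ (run v).take i <;>
      by_cases h2 : P1 e <;>
        simp [h1, h2]
  have hcore : ∀ e ∈ V,
      ∑ v : Fin M → Bool,
          (if (e, true) ∈ (run v).take i ∧ P1 e then (1 : ℝ) else 0) *
            marg f e (Sbefore (run v) e)
        = ∑ v : Fin M → Bool,
            (if P1 e ∧ ((e, true) ∈ (run v).take i ∨ (e, false) ∈ (run v).take i) ∧
                (e, true) ∉ (run v).take i then (1 : ℝ) else 0) *
              marg f e (Sbefore (run v) e) := by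
    intro e _
    by_cases hP : P1 e
    · calc ∑ v : Fin M → Bool,
            (if (e, true) ∈ (run v).take i ∧ P1 e then (1 : ℝ) else 0) *
              marg f e (Sbefore (run v) e)
          = ∑ v : Fin M → Bool,
              (if (e, true) ∈ (run v).take i then (1 : ℝ) else 0) *
                marg f e (Sbefore (run v) e) := by
            refine Finset.sum_congr rfl fun v _ => ?_
            rw [if_congr (show ((e, true) ∈ (run v).take i ∧ P1 e) ↔
              (e, true) ∈ (run v).take i from by tauto) rfl rfl]
        _ = ∑ v : Fin M → Bool,
              (if ((e, true) ∈ (run v).take i ∨ (e, false) ∈ (run v).take i) ∧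
                  (e, true) ∉ (run v).take i then (1 : ℝ) else 0) *
                marg f e (Sbefore (run v) e) :=
            core_sum f c B θ0 ε' n l M hM i e
        _ = ∑ v : Fin M → Bool,
              (if P1 e ∧ ((e, true) ∈ (run v).take i ∨ (e, false) ∈ (run v).take i) ∧
                  (e, true) ∉ (run v).take i then (1 : ℝ) else 0) *
                marg f e (Sbefore (run v) e) := by
            refine Finset.sum_congr rfl fun v _ => ?_
            rw [if_congr (show (((e, true) ∈ (run v).take i ∨ (e, false) ∈ (run v).take i) ∧
                (e, true) ∉ (run v).take i) ↔
              (P1 e ∧ ((e, true) ∈ (run v).take i ∨ (e, false) ∈ (run v).take i) ∧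
                (e, true) ∉ (run v).take i) from by tauto) rfl rfl]
    · refine Finset.sum_congr rfl fun v _ => ?_
      rw [if_neg (fun h => hP h.2), if_neg (fun h => hP h.1)]
  calc ∑ v : Fin M → Bool, f (Sset (run v) i)
      = ∑ v : Fin M → Bool, ∑ e ∈ V,
          ((if (e, true) ∈ (run v).take i ∧ ¬ P1 e then (1 : ℝ) else 0) *
              marg f e (Sbefore (run v) e)
            + (if (e, true) ∈ (run v).take i ∧ P1 e then (1 : ℝ) else 0) *
                marg f e (Sbefore (run v) e)) := by
        refine Finset.sum_congr rfl fun v _ => ?_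
        rw [lhs1 v]
        exact Finset.sum_congr rfl (lhs2 v)
    _ = (∑ v : Fin M → Bool, ∑ e ∈ V,
          (if (e, true) ∈ (run v).take i ∧ ¬ P1 e then (1 : ℝ) else 0) *
            marg f e (Sbefore (run v) e))
        + ∑ v : Fin M → Bool, ∑ e ∈ V,
            (if (e, true) ∈ (run v).take i ∧ P1 e then (1 : ℝ) else 0) *
              marg f e (Sbefore (run v) e) := by
        rw [← Finset.sum_add_distrib]
        exact Finset.sum_congr rfl fun v _ => Finset.sum_add_distrib
    _ = (∑ v : Fin M → Bool, ∑ e ∈ V,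
          (if (e, true) ∈ (run v).take i ∧ ¬ P1 e then (1 : ℝ) else 0) *
            marg f e (Sbefore (run v) e))
        + ∑ v : Fin M → Bool, ∑ e ∈ V,
            (if P1 e ∧ ((e, true) ∈ (run v).take i ∨ (e, false) ∈ (run v).take i) ∧
                (e, true) ∉ (run v).take i then (1 : ℝ) else 0) *
              marg f e (Sbefore (run v) e) := by
        congr 1
        rw [Finset.sum_comm]
        conv_rhs => rw [Finset.sum_comm]
        exact Finset.sum_congr rfl hcore
    _ = ∑ v : Fin M → Bool, ∑ e ∈ V,
          ((if (e, true) ∈ (run v).take i ∧ ¬ P1 e then (1 : ℝ) else 0) *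
              marg f e (Sbefore (run v) e)
            + (if P1 e ∧ ((e, true) ∈ (run v).take i ∨ (e, false) ∈ (run v).take i) ∧
                (e, true) ∉ (run v).take i then (1 : ℝ) else 0) *
                marg f e (Sbefore (run v) e)) := by
        rw [← Finset.sum_add_distrib]
        exact Finset.sum_congr rfl fun v _ => Finset.sum_add_distrib.symm
    _ = ∑ v : Fin M → Bool, ∑ e ∈ V,
          (if (P1 e ∧ e ∈ (((run v).take i).map Prod.fst).toFinset ∧
              e ∉ Sset (run v) i) ∨ (e ∈ Sset (run v) i ∧ ¬ P1 e)
            then (1 : ℝ) else 0) *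
            marg f e (Sbefore (run v) e) := by
        refine Finset.sum_congr rfl fun v _ => ?_
        exact (Finset.sum_congr rfl (rhs1 v)).symm

end AuxRLA

/-- (Lemma on phase 1 of `RLA`.)  Consider the end of phase 1 of
algorithm `RLA`, with candidate sequence `U = {u_1, …, u_j}` and random nested solutions
`∅ = S_0 ⊆ S_1 ⊆ … ⊆ S_j`, and let `O` be an optimal solution with
`r = argmax_{o ∈ O} c(o)`.  Then (a) for any index `i`,
`E[f(S_i)] = E[Σ_{e ∈ V} X_e · f(e|S^{<e})]`, and (b) for any index `i` such that
`c(S_i) ≤ B − c(r)`, `E[f(S_i)] = E[Σ_{e ∈ V} Y_e · f(e|S^{<e})]`.  The expectation is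
over the random sample `V_p` of the subroutine `LAR` and the fair coins of phase 1. -/
theorem rla_phase1_expectation {α : Type*} [DecidableEq α]
    (V : Finset α) (f : Finset α → ℝ) (c : α → ℝ) (B : ℝ) (hB : 0 < B)
    (hnonneg : ∀ S, S ⊆ V → 0 ≤ f S) (hnorm : f ∅ = 0)
    (hsub : ∀ A B' : Finset α, A ⊆ B' → B' ⊆ V → ∀ e ∈ V, e ∉ B' →
      f (insert e B') - f B' ≤ f (insert e A) - f A)
    (hc : ∀ e ∈ V, 0 < c e ∧ c e ≤ B)
    (ε : ℝ) (hε0 : 0 < ε) (hε1 : ε < 1) (ε' : ℝ) (hε' : ε' = ε / 10)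
    -- fixed scanning orders of `V` and of `V1 = {e ∈ V : c(e) ≤ B/2}`
    (l : List α) (hld : l.Nodup) (hlV : l.toFinset = V)
    (V1 : Finset α) (hV1 : V1 = V.filter (fun e => c e ≤ B / 2))
    (l1 : List α) (hl1d : l1.Nodup) (hl1V : l1.toFinset = V1)
    -- the maximal singleton `e_max = argmax_{e ∈ V} f({e})`
    (emax : α) (hemaxV : emax ∈ V) (hemax : ∀ e ∈ V, f {e} ≤ f {emax})
    -- the parameters of the subroutine `LAR`
    (p a : ℝ) (hp : p = Real.sqrt 2 - 1) (ha : a = Real.sqrt (2 + 2 * Real.sqrt 2))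
    -- for each realization `R` of `V_p`, the value `Γ = f(S')` of the `LAR` output and
    -- the initial threshold `θ0 = 16.034·Γ/(4ε'B)` of phase 1
    (Γ θ0 : Finset α → ℝ)
    (hΓ : ∀ R : Finset α, Γ R = f (larOut f c B a l1 R emax))
    (hθ0 : ∀ R : Finset α, θ0 R = 16.034 * Γ R / (4 * ε' * B))
    -- `N R` is the number of passes of phase 1: pass `t` runs iff its threshold
    -- `(1 − ε')^t · θ0` is still at least `Γ(1 − ε')/(4B)`
    (N : Finset α → ℕ)
    (hN : ∀ R ∈ V1.powerset, ∀ t : ℕ,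
      (Γ R * (1 - ε') / (4 * B) ≤ (1 - ε') ^ t * θ0 R ↔ t < N R))
    -- the number of available coins and the run of phase 1
    (M : ℕ) (hM : M = l.length)
    (Run : Finset α → (Fin M → Bool) → List (α × Bool))
    (hRun : ∀ R v, Run R v = rlaPhase1 f c B (θ0 R) ε' (N R) (coinSeq v) l)
    -- the expectation operator over the sample `R` (element-wise with probability `p`)
    -- and the `M` independent fair coins
    (Exp : (Finset α → (Fin M → Bool) → ℝ) → ℝ)
    (hExp : ∀ g : Finset α → (Fin M → Bool) → ℝ,
      Exp g = ∑ R ∈ V1.powerset, ∑ v : Fin M → Bool,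
        p ^ R.card * (1 - p) ^ (V1.card - R.card) * (1 / 2 : ℝ) ^ M * g R v)
    -- an optimal solution and its most expensive element `r`
    (O : Finset α) (hO : O ⊆ V) (hOc : cost c O ≤ B)
    (hOopt : ∀ T, T ⊆ V → cost c T ≤ B → f T ≤ f O)
    (r : α) (hrO : r ∈ O) (hr : ∀ o ∈ O, c o ≤ c r) :
    (∀ i : ℕ,
      Exp (fun R v => f (Sset (Run R v) i)) =
        Exp (fun R v => ∑ e ∈ V, xind O (Run R v) i e * marg f e (Sbefore (Run R v) e))) ∧
    (∀ i : ℕ,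
      (∀ R ∈ V1.powerset, ∀ v : Fin M → Bool, cost c (Sset (Run R v) i) ≤ B - c r) →
      Exp (fun R v => f (Sset (Run R v) i)) =
        Exp (fun R v =>
          ∑ e ∈ V, yind O r (Run R v) i e * marg f e (Sbefore (Run R v) e))) := by
  classical
  have main : ∀ (P1 : α → Prop) (i : ℕ),
      Exp (fun R v => f (Sset (Run R v) i)) =
        Exp (fun R v => ∑ e ∈ V,
          (if (P1 e ∧ e ∈ (((Run R v).take i).map Prod.fst).toFinset ∧
              e ∉ Sset (Run R v) i) ∨ (e ∈ Sset (Run R v) i ∧ ¬ P1 e)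
            then (1 : ℝ) else 0) * marg f e (Sbefore (Run R v) e)) := by
    intro P1 i
    rw [hExp, hExp]
    refine Finset.sum_congr rfl fun R hR => ?_
    rw [← Finset.mul_sum, ← Finset.mul_sum]
    congr 1
    simp only [hRun]
    exact key_identity f hnorm c B (θ0 R) ε' (N R) l V hlV M hM i P1
  constructor
  · intro i
    rw [main (fun e => e ∈ O) i]
    refine congrArg Exp (funext fun R => funext fun v => Finset.sum_congr rfl fun e he => ?_)
    simp only [xind]
    refine congrArg (· * marg f e (Sbefore (Run R v) e)) ?_
    exact ite_congr_prop (by tauto) _ _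
  · intro i _
    rw [main (fun e => e ∈ O ∧ e ≠ r) i]
    refine congrArg Exp (funext fun R => funext fun v => Finset.sum_congr rfl fun e he => ?_)
    simp only [yind]
    refine congrArg (· * marg f e (Sbefore (Run R v) e)) ?_
    exact ite_congr_prop (by tauto) _ _
end
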